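/- arXiv:1410.1007 — 4 statements merged into one kernel-verified Lean document; each statement's English description precedes it below -/
import Mathlib

section
/- Let n ≥ 2 be an integer and let a, b ∈ ℝ with 0 ≤ a < b. There exists an n-system P: [a, b] → ℝ^n such that P(a) = (a/n, …, a/n) and P(b) = (b/n, …, b/n). -/
noncomputable section

/-- `D` is a discrete subset of `I`: every point of `I` has a neighbourhood
meeting `D` in at most itself. -/
def DiscreteIn (D I : Set ℝ) : Prop :=
  D ⊆ I ∧ ∀ q ∈ I, ∃ ε > (0 : ℝ), D ∩ Set.Ioo (q - ε) (q + ε) ⊆ {q}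

/-- The set of points of `I` at which `P` is not differentiable, including the
boundary points of `I` that lie in `I`. -/
def NonDiffSet (n : ℕ) (I : Set ℝ) (P : ℝ → Fin n → ℝ) : Set ℝ :=
  {q ∈ I | q ∈ frontier I ∨ ¬DifferentiableAt ℝ P q}

/-- `P` is continuous piecewise linear on `I`: it is continuous on `I`, the set `D`
of points of `I` at which it is not differentiable (including boundary points of `I`
lying in `I`) is a discrete subset of `I`, and its derivative is locally constant
on `I \ D`. -/
def ContPiecewiseLinearOn (n : ℕ) (I : Set ℝ) (P : ℝ → Fin n → ℝ) : Prop :=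
  ContinuousOn P I ∧
  DiscreteIn (NonDiffSet n I P) I ∧
  ∀ q ∈ I \ NonDiffSet n I P, ∃ ε > (0 : ℝ),
    ∀ x ∈ (I \ NonDiffSet n I P) ∩ Set.Ioo (q - ε) (q + ε), deriv P x = deriv P q

/-- An `n`-system on `I` (Definition 4.1): conditions (S1), (S2), (S3). -/
def IsNSystem (n : ℕ) (I : Set ℝ) (P : ℝ → Fin n → ℝ) : Prop :=
  ContPiecewiseLinearOn n I P ∧
  -- (S1)
  (∀ q ∈ I, ((∀ i, 0 ≤ P q i) ∧ Monotone (P q)) ∧ ∑ i, P q i = q) ∧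
  -- (S2)
  (∀ a b : ℝ, a < b → Set.Ioo a b ⊆ I →
    (∀ q ∈ Set.Ioo a b, DifferentiableAt ℝ P q) →
    ∃ r : Fin n, (∀ q ∈ Set.Ioo a b, deriv (fun x => P x r) q = 1) ∧
      ∀ j : Fin n, j ≠ r → ∀ p ∈ Set.Ioo a b, ∀ q ∈ Set.Ioo a b, P p j = P q j) ∧
  -- (S3)
  (∀ q ∈ interior I, ¬DifferentiableAt ℝ P q →
    ∀ r s : Fin n, derivWithin (fun x => P x r) (Set.Iic q) q = 1 →
      derivWithin (fun x => P x s) (Set.Ici q) q = 1 → r < s →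
      ∀ i : Fin n, r ≤ i → i ≤ s → P q i = P q r)

/-- A generalized `n`-system on `I` (Definition 4.4): conditions (G1), (G2), (G3). -/
def IsGenNSystem (n : ℕ) (I : Set ℝ) (P : ℝ → Fin n → ℝ) : Prop :=
  ContPiecewiseLinearOn n I P ∧
  -- (G1)
  (∀ q ∈ I, ((∀ i, 0 ≤ P q i) ∧ Monotone (P q)) ∧ ∑ i, P q i = q) ∧
  -- (G2)
  (∀ a b : ℝ, a < b → Set.Ioo a b ⊆ I →
    (∀ q ∈ Set.Ioo a b, DifferentiableAt ℝ P q) →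
    ∃ rlo rhi : Fin n, rlo ≤ rhi ∧
      (∀ j : Fin n, rlo ≤ j → j ≤ rhi → ∀ q ∈ Set.Ioo a b,
        P q j = P q rlo ∧
        deriv (fun x => P x j) q = 1 / (((rhi : ℕ) : ℝ) - ((rlo : ℕ) : ℝ) + 1)) ∧
      (∀ j : Fin n, j < rlo ∨ rhi < j →
        ∀ p ∈ Set.Ioo a b, ∀ q ∈ Set.Ioo a b, P p j = P q j)) ∧
  -- (G3)
  (∀ q ∈ interior I, ¬DifferentiableAt ℝ P q →
    ∀ rlo rhi slo shi : Fin n, rlo ≤ rhi → slo ≤ shi →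
      (∀ j : Fin n, rlo ≤ j → j ≤ rhi →
        derivWithin (fun x => P x j) (Set.Iic q) q
          = 1 / (((rhi : ℕ) : ℝ) - ((rlo : ℕ) : ℝ) + 1)) →
      (∀ j : Fin n, slo ≤ j → j ≤ shi →
        derivWithin (fun x => P x j) (Set.Ici q) q
          = 1 / (((shi : ℕ) : ℝ) - ((slo : ℕ) : ℝ) + 1)) →
      rlo < shi →
      ∀ i : Fin n, rlo ≤ i → i ≤ shi → P q i = P q rlo)

namespace NSysAux

open Set Filter

/-- Clamp of `x - c` to `[0, h]`. -/
noncomputable def clmp (c h x : ℝ) : ℝ := max 0 (min (x - c) h)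

lemma clmp_of_le {c h x : ℝ} (hh : 0 ≤ h) (hx : x ≤ c) : clmp c h x = 0 := by
  unfold clmp
  rw [min_eq_left (by linarith), max_eq_left (by linarith)]

lemma clmp_of_mem {c h x : ℝ} (h1 : c ≤ x) (h2 : x ≤ c + h) : clmp c h x = x - c := by
  unfold clmp
  rw [min_eq_left (by linarith), max_eq_right (by linarith)]

lemma clmp_of_ge {c h x : ℝ} (hh : 0 ≤ h) (hx : c + h ≤ x) : clmp c h x = h := by
  unfold clmp
  rw [min_eq_right (by linarith), max_eq_right hh]

lemma clmp_nonneg (c h x : ℝ) : 0 ≤ clmp c h x := le_max_left _ _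

lemma clmp_decomp {h : ℝ} (hh : 0 ≤ h) (u s : ℝ) :
    clmp u h s = min s (u + h) - min s u := by
  unfold clmp
  rcases le_total s u with h1 | h1
  · rw [min_eq_left (by linarith : s - u ≤ h), max_eq_left (by linarith),
      min_eq_left (by linarith : s ≤ u + h), min_eq_left h1]
    ring
  · rcases le_total s (u + h) with h2 | h2
    · rw [min_eq_left (by linarith : s - u ≤ h), max_eq_right (by linarith),
        min_eq_left h2, min_eq_right h1]
    · rw [min_eq_right (by linarith : h ≤ s - u), max_eq_right hh,
        min_eq_right h2, min_eq_right h1]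
      ring

lemma continuous_clmp (c h : ℝ) : Continuous (clmp c h) :=
  continuous_const.max ((continuous_id.sub continuous_const).min continuous_const)

lemma hasDerivAt_clmp_lt {c h x : ℝ} (hh : 0 ≤ h) (hx : x < c) :
    HasDerivAt (clmp c h) 0 x := by
  refine (hasDerivAt_const x (0 : ℝ)).congr_of_eventuallyEq ?_
  filter_upwards [Iio_mem_nhds hx] with y hy
  exact clmp_of_le hh (le_of_lt hy)

lemma hasDerivAt_clmp_mid {c h x : ℝ} (h1 : c < x) (h2 : x < c + h) :
    HasDerivAt (clmp c h) 1 x := by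
  refine ((hasDerivAt_id x).sub_const c).congr_of_eventuallyEq ?_
  filter_upwards [Ioo_mem_nhds h1 h2] with y hy
  exact clmp_of_mem hy.1.le hy.2.le

lemma hasDerivAt_clmp_gt {c h x : ℝ} (hh : 0 ≤ h) (hx : c + h < x) :
    HasDerivAt (clmp c h) 0 x := by
  refine (hasDerivAt_const x h).congr_of_eventuallyEq ?_
  filter_upwards [Ioi_mem_nhds hx] with y hy
  exact clmp_of_ge hh (le_of_lt hy)

lemma hasDerivWithinAt_clmp_Iic_le {c h x : ℝ} (hh : 0 ≤ h) (hx : x ≤ c) :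
    HasDerivWithinAt (clmp c h) 0 (Iic x) x := by
  refine (hasDerivAt_const x (0 : ℝ)).hasDerivWithinAt.congr (fun y hy => ?_) (clmp_of_le hh hx)
  exact clmp_of_le hh (le_trans hy hx)

lemma hasDerivWithinAt_clmp_Iic_mid {c h x : ℝ} (h1 : c < x) (h2 : x ≤ c + h) :
    HasDerivWithinAt (clmp c h) 1 (Iic x) x := by
  refine ((hasDerivAt_id x).sub_const c).hasDerivWithinAt.congr_of_eventuallyEq ?_
    (clmp_of_mem h1.le h2)
  filter_upwards [inter_mem (mem_nhdsWithin_of_mem_nhds (Ioi_mem_nhds h1))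
    self_mem_nhdsWithin] with y hy
  exact clmp_of_mem hy.1.le (le_trans hy.2 h2)

lemma hasDerivWithinAt_clmp_Iic_ge {c h x : ℝ} (hh : 0 ≤ h) (hx : c + h < x) :
    HasDerivWithinAt (clmp c h) 0 (Iic x) x := by
  refine (hasDerivAt_const x h).hasDerivWithinAt.congr_of_eventuallyEq ?_
    (clmp_of_ge hh hx.le)
  filter_upwards [mem_nhdsWithin_of_mem_nhds (Ioi_mem_nhds hx)] with y hy
  exact clmp_of_ge hh hy.le

lemma hasDerivWithinAt_clmp_Ici_lt {c h x : ℝ} (hh : 0 ≤ h) (hx : x < c) :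
    HasDerivWithinAt (clmp c h) 0 (Ici x) x := by
  refine (hasDerivAt_const x (0 : ℝ)).hasDerivWithinAt.congr_of_eventuallyEq ?_
    (clmp_of_le hh hx.le)
  filter_upwards [mem_nhdsWithin_of_mem_nhds (Iio_mem_nhds hx)] with y hy
  exact clmp_of_le hh hy.le

lemma hasDerivWithinAt_clmp_Ici_mid {c h x : ℝ} (h1 : c ≤ x) (h2 : x < c + h) :
    HasDerivWithinAt (clmp c h) 1 (Ici x) x := by
  refine ((hasDerivAt_id x).sub_const c).hasDerivWithinAt.congr_of_eventuallyEq ?_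
    (clmp_of_mem h1 h2.le)
  filter_upwards [inter_mem (mem_nhdsWithin_of_mem_nhds (Iio_mem_nhds h2))
    self_mem_nhdsWithin] with y hy
  exact clmp_of_mem (le_trans h1 hy.2) hy.1.le

lemma hasDerivWithinAt_clmp_Ici_ge {c h x : ℝ} (hh : 0 ≤ h) (hx : c + h ≤ x) :
    HasDerivWithinAt (clmp c h) 0 (Ici x) x := by
  refine (hasDerivAt_const x h).hasDerivWithinAt.congr (fun y hy => ?_) (clmp_of_ge hh hx)
  exact clmp_of_ge hh (le_trans hx hy)

lemma not_differentiableAt_of_ne {f : ℝ → ℝ} {x d1 d2 : ℝ}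
    (h1 : HasDerivWithinAt f d1 (Iic x) x) (h2 : HasDerivWithinAt f d2 (Ici x) x)
    (hne : d1 ≠ d2) (hd : DifferentiableAt ℝ f x) : False := by
  have u1 : UniqueDiffWithinAt ℝ (Iic x) x := uniqueDiffOn_Iic x x self_mem_Iic
  have u2 : UniqueDiffWithinAt ℝ (Ici x) x := uniqueDiffOn_Ici x x self_mem_Ici
  have e1 := h1.derivWithin u1
  have e2 := h2.derivWithin u2
  rw [hd.derivWithin u1] at e1
  rw [hd.derivWithin u2] at e2
  exact hne (e1.symm.trans e2)

lemma exists_eps (S : Finset ℝ) (q : ℝ) : ∃ ε > (0 : ℝ), ∀ y ∈ S, |y - q| < ε → y = q := by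
  classical
  induction S using Finset.induction_on with
  | empty => exact ⟨1, one_pos, fun y hy => absurd hy (Finset.notMem_empty y)⟩
  | @insert x S hxS ih =>
    obtain ⟨ε, hε, hS⟩ := ih
    by_cases hxq : x = q
    · refine ⟨ε, hε, fun y hy h => ?_⟩
      rcases Finset.mem_insert.mp hy with rfl | hy'
      exacts [hxq, hS y hy' h]
    · refine ⟨min ε |x - q|, lt_min hε (abs_pos.mpr (sub_ne_zero.mpr hxq)), fun y hy h => ?_⟩
      rcases Finset.mem_insert.mp hy with rfl | hy'
      · exact absurd (lt_of_lt_of_le h (min_le_right _ _)) (lt_irrefl _)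
      · exact hS y hy' (lt_of_lt_of_le h (min_le_left _ _))

/-! ### The construction -/

noncomputable def st (n : ℕ) (a b : ℝ) : ℝ := (b - a) / n

noncomputable def tt (n : ℕ) (a b : ℝ) (k : ℕ) : ℝ := a + k * st n a b

noncomputable def cc (n : ℕ) (a b : ℝ) (i : Fin n) : ℝ := tt n a b (n - 1 - (i : ℕ))

noncomputable def PP (n : ℕ) (a b : ℝ) (q : ℝ) (i : Fin n) : ℝ :=
  a / n + clmp (cc n a b i) (st n a b) q

variable {n : ℕ} {a b : ℝ}

lemma st_pos (hn : 0 < n) (hab : a < b) : 0 < st n a b :=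
  div_pos (by linarith) (by exact_mod_cast hn)

lemma tt_zero : tt n a b 0 = a := by simp [tt]

lemma tt_succ (k : ℕ) : tt n a b (k + 1) = tt n a b k + st n a b := by
  unfold tt; push_cast; ring

lemma tt_n (hn : 0 < n) : tt n a b n = b := by
  unfold tt st
  rw [mul_div_cancel₀ _ (by exact_mod_cast hn.ne' : (n : ℝ) ≠ 0)]
  ring

lemma tt_mono (hst : 0 ≤ st n a b) : Monotone (tt n a b) := by
  intro k l hkl
  unfold tt
  have : (k : ℝ) ≤ l := by exact_mod_cast hkl
  nlinarith

lemma tt_lt (hst : 0 < st n a b) {k l : ℕ} (hkl : k < l) : tt n a b k < tt n a b l := by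
  unfold tt
  have : (k : ℝ) < l := by exact_mod_cast hkl
  nlinarith

lemma cc_def (i : Fin n) : cc n a b i = tt n a b (n - 1 - (i : ℕ)) := rfl

lemma cc_add_st (i : Fin n) : cc n a b i + st n a b = tt n a b (n - (i : ℕ)) := by
  have := i.isLt
  rw [cc_def, ← tt_succ, show n - 1 - (i : ℕ) + 1 = n - (i : ℕ) by omega]

lemma exists_stage (hn : 0 < n) (hab : a < b) {q : ℝ} (hq : q ∈ Ioo a b)
    (hT : ∀ k ≤ n, q ≠ tt n a b k) :
    ∃ k, k < n ∧ tt n a b k < q ∧ q < tt n a b (k + 1) := by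
  classical
  have hst := st_pos hn hab
  have hne : ((Finset.range (n + 1)).filter (fun k => tt n a b k < q)).Nonempty :=
    ⟨0, Finset.mem_filter.mpr ⟨Finset.mem_range.mpr (by omega),
      by rw [tt_zero]; exact hq.1⟩⟩
  obtain ⟨hkr, hkq⟩ := Finset.mem_filter.mp (Finset.max'_mem _ hne)
  set k := ((Finset.range (n + 1)).filter (fun k => tt n a b k < q)).max' hne with hkdef
  have hkn' : k ≤ n := by have := Finset.mem_range.mp hkr; omega
  have hkn : k < n := by
    by_contra hc
    have hkeq : k = n := by omega
    rw [hkeq, tt_n hn] at hkq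
    exact absurd hkq (not_lt.mpr hq.2.le)
  refine ⟨k, hkn, hkq, ?_⟩
  have hnotmem : k + 1 ∉ (Finset.range (n + 1)).filter (fun k => tt n a b k < q) := by
    intro hmem
    have := Finset.le_max' _ (k + 1) hmem
    omega
  have hle : ¬ tt n a b (k + 1) < q := fun hlt =>
    hnotmem (Finset.mem_filter.mpr ⟨Finset.mem_range.mpr (by omega), hlt⟩)
  exact lt_of_le_of_ne (not_lt.mp hle) (hT (k + 1) (by omega))

lemma hasDerivAt_PP (hn : 0 < n) (hab : a < b) {k : ℕ} (hk : k < n) {x : ℝ}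
    (hx1 : tt n a b k < x) (hx2 : x < tt n a b (k + 1)) :
    HasDerivAt (PP n a b) (fun i : Fin n => if (i : ℕ) = n - 1 - k then 1 else 0) x := by
  have hst := st_pos hn hab
  rw [hasDerivAt_pi]
  intro i
  have hin := i.isLt
  show HasDerivAt (fun q => a / (n : ℝ) + clmp (cc n a b i) (st n a b) q)
    (if (i : ℕ) = n - 1 - k then 1 else 0) x
  rcases lt_trichotomy ((i : ℕ)) (n - 1 - k) with hi | hi | hi
  · rw [if_neg (by omega)]
    have hcx : x < cc n a b i := by
      rw [cc_def]
      exact lt_of_lt_of_le hx2 (tt_mono hst.le (by omega))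
    exact (hasDerivAt_clmp_lt hst.le hcx).const_add _
  · rw [if_pos hi]
    have h1 : cc n a b i < x := by
      rw [cc_def, show n - 1 - (i : ℕ) = k by omega]; exact hx1
    have h2 : x < cc n a b i + st n a b := by
      rw [cc_add_st, show n - (i : ℕ) = k + 1 by omega]; exact hx2
    exact (hasDerivAt_clmp_mid h1 h2).const_add _
  · rw [if_neg (by omega)]
    have hcx : cc n a b i + st n a b < x := by
      rw [cc_add_st]
      exact lt_of_le_of_lt (tt_mono hst.le (by omega)) hx1
    exact (hasDerivAt_clmp_gt hst.le hcx).const_add _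

lemma hasDerivWithinAt_PP_Iic (hn : 0 < n) (hab : a < b) {k : ℕ} (hk1 : 1 ≤ k)
    (hk2 : k ≤ n) (i : Fin n) :
    HasDerivWithinAt (fun x => PP n a b x i) (if (i : ℕ) = n - k then 1 else 0)
      (Iic (tt n a b k)) (tt n a b k) := by
  have hst := st_pos hn hab
  have hin := i.isLt
  show HasDerivWithinAt (fun q => a / (n : ℝ) + clmp (cc n a b i) (st n a b) q) _ _ _
  rcases lt_trichotomy ((i : ℕ)) (n - k) with hi | hi | hi
  · rw [if_neg (by omega)]
    have hcx : tt n a b k ≤ cc n a b i := by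
      rw [cc_def]; exact tt_mono hst.le (by omega)
    exact (hasDerivWithinAt_clmp_Iic_le hst.le hcx).const_add _
  · rw [if_pos hi]
    have h1 : cc n a b i < tt n a b k := by
      rw [cc_def]; exact tt_lt hst (by omega)
    have h2 : tt n a b k ≤ cc n a b i + st n a b := by
      rw [cc_add_st, show n - (i : ℕ) = k by omega]
    exact (hasDerivWithinAt_clmp_Iic_mid h1 h2).const_add _
  · rw [if_neg (by omega)]
    have hcx : cc n a b i + st n a b < tt n a b k := by
      rw [cc_add_st]; exact tt_lt hst (by omega)
    exact (hasDerivWithinAt_clmp_Iic_ge hst.le hcx).const_add _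

lemma hasDerivWithinAt_PP_Ici (hn : 0 < n) (hab : a < b) {k : ℕ} (hk2 : k < n) (i : Fin n) :
    HasDerivWithinAt (fun x => PP n a b x i) (if (i : ℕ) = n - 1 - k then 1 else 0)
      (Ici (tt n a b k)) (tt n a b k) := by
  have hst := st_pos hn hab
  have hin := i.isLt
  show HasDerivWithinAt (fun q => a / (n : ℝ) + clmp (cc n a b i) (st n a b) q) _ _ _
  rcases lt_trichotomy ((i : ℕ)) (n - 1 - k) with hi | hi | hi
  · rw [if_neg (by omega)]
    have hcx : tt n a b k < cc n a b i := by
      rw [cc_def]; exact tt_lt hst (by omega)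
    exact (hasDerivWithinAt_clmp_Ici_lt hst.le hcx).const_add _
  · rw [if_pos hi]
    have h1 : cc n a b i ≤ tt n a b k := by
      rw [cc_def, show n - 1 - (i : ℕ) = k by omega]
    have h2 : tt n a b k < cc n a b i + st n a b := by
      rw [cc_add_st, show n - (i : ℕ) = k + 1 by omega]
      exact tt_lt hst (by omega)
    exact (hasDerivWithinAt_clmp_Ici_mid h1 h2).const_add _
  · rw [if_neg (by omega)]
    have hcx : cc n a b i + st n a b ≤ tt n a b k := by
      rw [cc_add_st]; exact tt_mono hst.le (by omega)
    exact (hasDerivWithinAt_clmp_Ici_ge hst.le hcx).const_add _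

lemma not_diff_PP (hn : 0 < n) (hab : a < b) {k : ℕ} (hk1 : 1 ≤ k) (hk2 : k < n) :
    ¬ DifferentiableAt ℝ (PP n a b) (tt n a b k) := by
  intro hd
  have hi : n - k < n := by omega
  have h1 := hasDerivWithinAt_PP_Iic hn hab hk1 hk2.le (⟨n - k, hi⟩ : Fin n)
  have h2 := hasDerivWithinAt_PP_Ici hn hab hk2 (⟨n - k, hi⟩ : Fin n)
  rw [if_pos rfl] at h1
  rw [if_neg (show ¬ ((⟨n - k, hi⟩ : Fin n) : ℕ) = n - 1 - k by simp; omega)] at h2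
  exact not_differentiableAt_of_ne h1 h2 one_ne_zero ((differentiableAt_pi.mp hd) _)

lemma diff_or_break (hn : 0 < n) (hab : a < b) {q : ℝ} (hq : q ∈ Ioo a b) :
    DifferentiableAt ℝ (PP n a b) q ∨ ∃ k, 1 ≤ k ∧ k < n ∧ q = tt n a b k := by
  by_cases hT : ∀ k ≤ n, q ≠ tt n a b k
  · obtain ⟨k, hk, h1, h2⟩ := exists_stage hn hab hq hT
    exact Or.inl (hasDerivAt_PP hn hab hk h1 h2).differentiableAt
  · push_neg at hT
    obtain ⟨k, hk, heq⟩ := hT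
    have hk0 : k ≠ 0 := by
      rintro rfl
      rw [tt_zero] at heq
      rw [heq] at hq
      exact lt_irrefl a hq.1
    have hkn : k ≠ n := by
      rintro rfl
      rw [tt_n hn] at heq
      rw [heq] at hq
      exact lt_irrefl b hq.2
    exact Or.inr ⟨k, by omega, by omega, heq⟩

lemma sum_PP (hn : 0 < n) (hab : a < b) {q : ℝ} (h1 : a ≤ q) (h2 : q ≤ b) :
    ∑ i, PP n a b q i = q := by
  have hst := (st_pos hn hab).le
  have key : ∀ i : Fin n, PP n a b q i
      = a / n + (min q (tt n a b (n - 1 - (i : ℕ) + 1)) - min q (tt n a b (n - 1 - (i : ℕ)))) := by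
    intro i
    unfold PP
    rw [clmp_decomp hst, cc_def, ← tt_succ]
  rw [Finset.sum_congr rfl (fun i _ => key i), Finset.sum_add_distrib, Finset.sum_const,
    Finset.card_univ, Fintype.card_fin, nsmul_eq_mul,
    Fin.sum_univ_eq_sum_range
      (fun j => min q (tt n a b (n - 1 - j + 1)) - min q (tt n a b (n - 1 - j))) n,
    Finset.sum_range_reflect (fun j => min q (tt n a b (j + 1)) - min q (tt n a b j)) n,
    Finset.sum_range_sub (fun j => min q (tt n a b j)) n,
    tt_zero, tt_n hn, min_eq_left h2, min_eq_right h1,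
    mul_div_cancel₀ _ (by exact_mod_cast hn.ne' : (n : ℝ) ≠ 0)]
  ring

lemma mono_PP (hst : 0 ≤ st n a b) (q : ℝ) : Monotone (PP n a b q) := by
  intro i j hij
  have hccle : cc n a b j ≤ cc n a b i := by
    rw [cc_def, cc_def]
    exact tt_mono hst (by have := Fin.le_def.mp hij; omega)
  unfold PP clmp
  exact add_le_add le_rfl (max_le_max le_rfl (min_le_min (by linarith) le_rfl))

lemma PP_left (hn : 0 < n) (hab : a < b) (i : Fin n) : PP n a b a i = a / n := by
  have hst := (st_pos hn hab).le
  have : a ≤ cc n a b i := by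
    rw [cc_def]
    calc a = tt n a b 0 := tt_zero.symm
    _ ≤ _ := tt_mono hst (Nat.zero_le _)
  unfold PP
  rw [clmp_of_le hst this, add_zero]

lemma PP_right (hn : 0 < n) (hab : a < b) (i : Fin n) : PP n a b b i = b / n := by
  have hst := (st_pos hn hab).le
  have : cc n a b i + st n a b ≤ b := by
    rw [cc_add_st]
    calc tt n a b (n - (i : ℕ)) ≤ tt n a b n := tt_mono hst (Nat.sub_le _ _)
    _ = b := tt_n hn
  unfold PP
  rw [clmp_of_ge hst this]
  unfold st
  rw [← add_div]
  congr 1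
  ring

end NSysAux

open NSysAux in
/-- Lemma 4.2: for `0 ≤ a < b` there is an `n`-system `P` on `[a,b]` with
`P(a) = (a/n,…,a/n)` and `P(b) = (b/n,…,b/n)`. -/
theorem exists_nsystem_diagonal_endpoints (n : ℕ) (hn : 2 ≤ n)
    (a b : ℝ) (ha : 0 ≤ a) (hab : a < b) :
    ∃ P : ℝ → Fin n → ℝ, IsNSystem n (Set.Icc a b) P ∧
      (∀ i : Fin n, P a i = a / n) ∧ (∀ i : Fin n, P b i = b / n) := by
  classical
  have hn0 : 0 < n := by omega
  have hst : 0 < st n a b := st_pos hn0 hab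
  have hcont : Continuous (PP n a b) :=
    continuous_pi fun i => continuous_const.add (continuous_clmp _ _)
  have hDsub : ∀ q ∈ NonDiffSet n (Set.Icc a b) (PP n a b), ∃ k ≤ n, q = tt n a b k := by
    rintro q ⟨hqI, hq⟩
    by_cases hqa : q = a
    · exact ⟨0, by omega, by rw [hqa, tt_zero]⟩
    by_cases hqb : q = b
    · exact ⟨n, le_rfl, by rw [hqb, tt_n hn0]⟩
    have hIoo : q ∈ Set.Ioo a b :=
      ⟨lt_of_le_of_ne hqI.1 (Ne.symm hqa), lt_of_le_of_ne hqI.2 hqb⟩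
    rcases hq with hfr | hnd
    · rw [frontier_Icc hab.le] at hfr
      simp only [Set.mem_insert_iff, Set.mem_singleton_iff] at hfr
      rcases hfr with rfl | rfl
      · exact absurd rfl hqa
      · exact absurd rfl hqb
    · rcases diff_or_break hn0 hab hIoo with hd | ⟨k, _, hk2, heq⟩
      · exact absurd hd hnd
      · exact ⟨k, hk2.le, heq⟩
  refine ⟨PP n a b, ⟨⟨hcont.continuousOn, ⟨fun q hq => hq.1, ?_⟩, ?_⟩, ?_, ?_, ?_⟩, ?_, ?_⟩
  · -- discreteness
    intro q hq
    obtain ⟨ε, hε, hS⟩ := exists_eps ((Finset.range (n + 1)).image (tt n a b)) q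
    refine ⟨ε, hε, fun y hy => ?_⟩
    obtain ⟨k, hk, rfl⟩ := hDsub y hy.1
    have hmem : tt n a b k ∈ (Finset.range (n + 1)).image (tt n a b) :=
      Finset.mem_image.mpr ⟨k, Finset.mem_range.mpr (by omega), rfl⟩
    have habs : |tt n a b k - q| < ε := abs_lt.mpr ⟨by linarith [hy.2.1], by linarith [hy.2.2]⟩
    exact Set.mem_singleton_iff.mpr (hS _ hmem habs)
  · -- locally constant derivative
    rintro q ⟨hqI, hqD⟩
    have hq2 : ¬(q ∈ frontier (Set.Icc a b) ∨ ¬DifferentiableAt ℝ (PP n a b) q) :=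
      fun h => hqD ⟨hqI, h⟩
    push_neg at hq2
    obtain ⟨hfr, hdiff⟩ := hq2
    rw [frontier_Icc hab.le] at hfr
    simp only [Set.mem_insert_iff, Set.mem_singleton_iff] at hfr
    push_neg at hfr
    have hIoo : q ∈ Set.Ioo a b :=
      ⟨lt_of_le_of_ne hqI.1 (Ne.symm hfr.1), lt_of_le_of_ne hqI.2 hfr.2⟩
    have hT : ∀ k ≤ n, q ≠ tt n a b k := by
      intro k hk heq
      rcases Nat.eq_zero_or_pos k with rfl | hk1
      · rw [tt_zero] at heq; exact hfr.1 heq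
      by_cases hkn : k = n
      · rw [hkn, tt_n hn0] at heq; exact hfr.2 heq
      · exact not_diff_PP hn0 hab hk1 (by omega) (heq ▸ hdiff)
    obtain ⟨k, hkn, h1, h2⟩ := exists_stage hn0 hab hIoo hT
    refine ⟨min (q - tt n a b k) (tt n a b (k + 1) - q),
      lt_min (by linarith) (by linarith), ?_⟩
    rintro x ⟨-, hx2⟩
    have hm1 := min_le_left (q - tt n a b k) (tt n a b (k + 1) - q)
    have hm2 := min_le_right (q - tt n a b k) (tt n a b (k + 1) - q)
    have hx1' : tt n a b k < x := by linarith [hx2.1]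
    have hx2' : x < tt n a b (k + 1) := by linarith [hx2.2]
    rw [(hasDerivAt_PP hn0 hab hkn hx1' hx2').deriv,
      (hasDerivAt_PP hn0 hab hkn h1 h2).deriv]
  · -- (S1)
    intro q hq
    exact ⟨⟨fun i => add_nonneg (div_nonneg ha (Nat.cast_nonneg n)) (clmp_nonneg _ _ _),
      mono_PP hst.le q⟩, sum_PP hn0 hab hq.1 hq.2⟩
  · -- (S2)
    intro a' b' ha'b' hsub hdiff
    have haa' : a ≤ a' := by
      by_contra hlt
      push_neg at hlt
      obtain ⟨x, hx1, hx2⟩ := exists_between (lt_min hlt ha'b')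
      have hx := hsub ⟨hx1, lt_of_lt_of_le hx2 (min_le_right _ _)⟩
      exact absurd hx.1 (not_le.mpr (lt_of_lt_of_le hx2 (min_le_left _ _)))
    have hbb' : b' ≤ b := by
      by_contra hlt
      push_neg at hlt
      obtain ⟨x, hx1, hx2⟩ := exists_between (max_lt hlt ha'b' : max b a' < b')
      have hx := hsub ⟨lt_of_le_of_lt (le_max_right _ _) hx1, hx2⟩
      exact absurd hx.2 (not_le.mpr (lt_of_le_of_lt (le_max_left _ _) hx1))
    have hma : a' < (a' + b') / 2 := by linarith
    have hmb : (a' + b') / 2 < b' := by linarith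
    have hmI : (a' + b') / 2 ∈ Set.Ioo a b :=
      ⟨lt_of_le_of_lt haa' hma, lt_of_lt_of_le hmb hbb'⟩
    have hTnotin : ∀ k ≤ n, tt n a b k ∉ Set.Ioo a' b' := by
      intro k hk hmem
      rcases Nat.eq_zero_or_pos k with rfl | hk1
      · rw [tt_zero] at hmem; exact absurd haa' (not_le.mpr hmem.1)
      by_cases hkn : k = n
      · rw [hkn, tt_n hn0] at hmem; exact absurd hbb' (not_le.mpr hmem.2)
      · exact not_diff_PP hn0 hab hk1 (by omega) (hdiff _ hmem)
    have hT : ∀ k ≤ n, (a' + b') / 2 ≠ tt n a b k :=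
      fun k hk heq => hTnotin k hk (heq ▸ ⟨hma, hmb⟩)
    obtain ⟨k, hkn, h1, h2⟩ := exists_stage hn0 hab hmI hT
    have hsub' : Set.Ioo a' b' ⊆ Set.Ioo (tt n a b k) (tt n a b (k + 1)) := by
      intro x hx
      constructor
      · by_contra hc
        push_neg at hc
        exact hTnotin k (by omega) ⟨lt_of_lt_of_le hx.1 hc, lt_trans h1 hmb⟩
      · by_contra hc
        push_neg at hc
        exact hTnotin (k + 1) (by omega) ⟨lt_trans hma h2, lt_of_le_of_lt hc hx.2⟩
    refine ⟨⟨n - 1 - k, by omega⟩, ?_, ?_⟩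
    · intro q hq
      obtain ⟨hq1, hq2⟩ := hsub' hq
      have hD := (hasDerivAt_pi.mp (hasDerivAt_PP hn0 hab hkn hq1 hq2))
        (⟨n - 1 - k, by omega⟩ : Fin n)
      rw [hD.deriv]
      simp
    · intro j hj p hp q hq
      have hjv : (j : ℕ) ≠ n - 1 - k := fun h => hj (Fin.ext h)
      have key : ∀ x ∈ Set.Ioo a' b', PP n a b x j
          = if (j : ℕ) < n - 1 - k then a / (n : ℝ) else a / (n : ℝ) + st n a b := by
        intro x hx
        obtain ⟨hx1, hx2⟩ := hsub' hx
        have hjn := j.isLt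
        by_cases hlt : (j : ℕ) < n - 1 - k
        · rw [if_pos hlt]
          have hxc : x ≤ cc n a b j := by
            rw [cc_def]
            exact le_of_lt (lt_of_lt_of_le hx2 (tt_mono hst.le (by omega)))
          show a / (n : ℝ) + clmp (cc n a b j) (st n a b) x = a / (n : ℝ)
          rw [clmp_of_le hst.le hxc, add_zero]
        · rw [if_neg hlt]
          have hxc : cc n a b j + st n a b ≤ x := by
            rw [cc_add_st]
            exact le_of_lt (lt_of_le_of_lt (tt_mono hst.le (by omega)) hx1)
          show a / (n : ℝ) + clmp (cc n a b j) (st n a b) x = a / (n : ℝ) + st n a b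
          rw [clmp_of_ge hst.le hxc]
      rw [key p hp, key q hq]
  · -- (S3)
    intro q hq hnd r s hr hs hrs i _ _
    exfalso
    rw [interior_Icc] at hq
    rcases diff_or_break hn0 hab hq with hd | ⟨k, hk1, hk2, rfl⟩
    · exact hnd hd
    have u1 : UniqueDiffWithinAt ℝ (Set.Iic (tt n a b k)) (tt n a b k) :=
      uniqueDiffOn_Iic _ _ Set.self_mem_Iic
    have u2 : UniqueDiffWithinAt ℝ (Set.Ici (tt n a b k)) (tt n a b k) :=
      uniqueDiffOn_Ici _ _ Set.self_mem_Ici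
    have e1 := (hasDerivWithinAt_PP_Iic hn0 hab hk1 hk2.le r).derivWithin u1
    have e2 := (hasDerivWithinAt_PP_Ici hn0 hab hk2 s).derivWithin u2
    rw [hr] at e1
    rw [hs] at e2
    have hrv : (r : ℕ) = n - k := by
      by_contra hne; rw [if_neg hne] at e1; exact one_ne_zero e1
    have hsv : (s : ℕ) = n - 1 - k := by
      by_contra hne; rw [if_neg hne] at e2; exact one_ne_zero e2
    have hlt := Fin.lt_def.mp hrs
    omega
  · exact PP_left hn0 hab
  · exact PP_right hn0 hab

end
end

section
/- Let n ≥ 2 be an integer and let a, b, c ∈ ℝ with 0 ≤ a < b < c. Suppose that P⁽¹⁾: [a, b] → ℝ^n and P⁽²⁾: [b, c] → ℝ^n are n-systems with P⁽¹⁾(b) = P⁽²⁾(b) = (b/n, …, b/n). Then there is an n-system P on [a, c] which restricts to P⁽¹⁾ on [a, b] and to P⁽²⁾ on [b, c]. -/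
noncomputable section

section helpers
variable {E : Type*} [NormedAddCommGroup E] [NormedSpace ℝ E]

/-- A locally constant function on an open interval is constant. -/
lemma const_of_locally_const {g : ℝ → E} {u w x₀ : ℝ}
    (h : ∀ x ∈ Set.Ioo u w, ∃ ε > (0:ℝ), ∀ y ∈ Set.Ioo u w ∩ Set.Ioo (x - ε) (x + ε), g y = g x)
    (hx₀ : x₀ ∈ Set.Ioo u w) : ∀ x ∈ Set.Ioo u w, g x = g x₀ := by
  classical
  set T : Set ℝ := {x | x ∈ Set.Ioo u w ∧ g x = g x₀} with hT
  set U : Set ℝ := {x | x ∈ Set.Ioo u w ∧ g x ≠ g x₀} with hU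
  have hTopen : IsOpen T := by
    rw [isOpen_iff_mem_nhds]
    intro x hx
    obtain ⟨ε, hε, hconst⟩ := h x hx.1
    have : Set.Ioo u w ∩ Set.Ioo (x - ε) (x + ε) ∈ nhds x :=
      Filter.inter_mem (isOpen_Ioo.mem_nhds hx.1)
        (isOpen_Ioo.mem_nhds ⟨by linarith [hx.1.1], by linarith [hx.1.2]⟩)
    exact Filter.mem_of_superset this fun y hy => ⟨hy.1, (hconst y hy).trans hx.2⟩
  have hUopen : IsOpen U := by
    rw [isOpen_iff_mem_nhds]
    intro x hx
    obtain ⟨ε, hε, hconst⟩ := h x hx.1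
    have : Set.Ioo u w ∩ Set.Ioo (x - ε) (x + ε) ∈ nhds x :=
      Filter.inter_mem (isOpen_Ioo.mem_nhds hx.1)
        (isOpen_Ioo.mem_nhds ⟨by linarith [hx.1.1], by linarith [hx.1.2]⟩)
    exact Filter.mem_of_superset this fun y hy =>
      ⟨hy.1, fun hc => hx.2 ((hconst y hy).symm.trans hc)⟩
  have hdisj : Disjoint T U := by
    rw [Set.disjoint_left]; intro x hx hx'; exact hx'.2 hx.2
  have hcover : Set.Ioo u w ⊆ T ∪ U := by
    intro x hx
    by_cases hg : g x = g x₀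
    · exact Or.inl ⟨hx, hg⟩
    · exact Or.inr ⟨hx, hg⟩
  have hsub : Set.Ioo u w ⊆ T :=
    (isPreconnected_Ioo).subset_left_of_subset_union hTopen hUopen hdisj hcover
      ⟨x₀, hx₀, hx₀, rfl⟩
  exact fun x hx => (hsub hx).2

/-- A continuous function on `[u,w]` whose derivative is `v` on `(u,w)` is affine. -/
lemma affine_of_deriv_const {f : ℝ → E} {v : E} {u w : ℝ} (huw : u < w)
    (hc : ContinuousOn f (Set.Icc u w)) (hd : ∀ x ∈ Set.Ioo u w, HasDerivAt f v x) :
    ∀ x ∈ Set.Icc u w, f x = f w + (x - w) • v := by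
  have key : ∀ x ∈ Set.Ioc u w, f x = f w + (x - w) • v := by
    rintro x ⟨hux, hxw⟩
    rcases eq_or_lt_of_le hxw with rfl | hxw
    · simp
    · -- use constancy of g y = f y - (y - w) • v on [x, w]
      have hg : ∀ y ∈ Set.Ico x w, HasDerivWithinAt (fun y => f y - (y - w) • v) 0 (Set.Ici y) y := by
        intro y hy
        have h1 : HasDerivAt f v y := hd y ⟨lt_of_lt_of_le hux hy.1, hy.2⟩
        have h2 : HasDerivAt (fun y : ℝ => (y - w) • v) v y := by
          simpa using ((hasDerivAt_id y).sub_const w).smul_const v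
        have h3 := (h1.sub h2).hasDerivWithinAt (s := Set.Ici y)
        rw [sub_self] at h3
        exact h3
      have hgc : ContinuousOn (fun y => f y - (y - w) • v) (Set.Icc x w) := by
        apply ContinuousOn.sub (hc.mono (Set.Icc_subset_Icc hux.le le_rfl))
        fun_prop
      have := constant_of_has_deriv_right_zero hgc hg w (Set.right_mem_Icc.2 hxw.le)
      have h' : f w - (w - w) • v = f x - (x - w) • v := this
      simp only [sub_self, zero_smul, sub_zero] at h'
      rw [h']; abel
  rintro x ⟨hux, hxw⟩
  rcases eq_or_lt_of_le hux with rfl | hux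
  · -- left endpoint: take limits
    have hne : (nhdsWithin u (Set.Ioc u w)).NeBot := left_nhdsWithin_Ioc_neBot huw
    have h1 : Filter.Tendsto f (nhdsWithin u (Set.Ioc u w)) (nhds (f u)) :=
      (hc u (Set.left_mem_Icc.2 huw.le)).tendsto.mono_left
        (nhdsWithin_mono _ Set.Ioc_subset_Icc_self)
    have h2 : Filter.Tendsto (fun y : ℝ => f w + (y - w) • v) (nhdsWithin u (Set.Ioc u w))
        (nhds (f w + (u - w) • v)) := by
      apply Filter.Tendsto.mono_left _ nhdsWithin_le_nhds
      exact (Continuous.tendsto (by fun_prop) u)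
    exact tendsto_nhds_unique_of_eventuallyEq h1 h2
      (eventually_mem_nhdsWithin.mono fun y hy => key y hy)
  · exact key x ⟨hux, hxw⟩

/-- Right-endpoint one-sided derivative from constant derivative on the interior. -/
lemma hasDerivWithinAt_right_of_deriv_const {f : ℝ → E} {v : E} {u w : ℝ} (huw : u < w)
    (hc : ContinuousOn f (Set.Icc u w)) (hd : ∀ x ∈ Set.Ioo u w, HasDerivAt f v x) :
    HasDerivWithinAt f v (Set.Icc u w) w := by
  have key := affine_of_deriv_const huw hc hd
  have hl : HasDerivWithinAt (fun y : ℝ => f w + (y - w) • v) v (Set.Icc u w) w := by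
    have : HasDerivAt (fun y : ℝ => f w + (y - w) • v) v w := by
      simpa using (((hasDerivAt_id w).sub_const w).smul_const v).const_add (f w)
    exact this.hasDerivWithinAt
  refine hl.congr (fun y hy => key y hy) (key w (Set.right_mem_Icc.2 huw.le))

/-- Left-endpoint one-sided derivative from constant derivative on the interior. -/
lemma hasDerivWithinAt_left_of_deriv_const {f : ℝ → E} {v : E} {u w : ℝ} (huw : u < w)
    (hc : ContinuousOn f (Set.Icc u w)) (hd : ∀ x ∈ Set.Ioo u w, HasDerivAt f v x) :
    HasDerivWithinAt f v (Set.Icc u w) u := by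
  have key := affine_of_deriv_const huw hc hd
  have hl : HasDerivWithinAt (fun y : ℝ => f w + (y - w) • v) v (Set.Icc u w) u := by
    have : HasDerivAt (fun y : ℝ => f w + (y - w) • v) v u := by
      simpa using (((hasDerivAt_id u).sub_const w).smul_const v).const_add (f w)
    exact this.hasDerivWithinAt
  refine hl.congr (fun y hy => key y hy) (key u (Set.left_mem_Icc.2 huw.le))

/-- A continuous function on `[u,w]` constant on the interior is constant on `[u,w]`. -/
lemma eq_endpoint_of_const_Ioo {f : ℝ → E} {κ : E} {u w : ℝ} (huw : u < w)
    (hc : ContinuousOn f (Set.Icc u w)) (h : ∀ x ∈ Set.Ioo u w, f x = κ) :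
    ∀ x ∈ Set.Icc u w, f x = κ := by
  have hd : ∀ x ∈ Set.Ioo u w, HasDerivAt f (0 : E) x := by
    intro x hx
    have : f =ᶠ[nhds x] fun _ => κ :=
      Filter.eventuallyEq_of_mem (isOpen_Ioo.mem_nhds hx) fun y hy => h y hy
    exact (hasDerivAt_const x κ).congr_of_eventuallyEq this
  have key := affine_of_deriv_const huw hc hd
  have hwv : f w = κ := by
    have hmid : (u + w) / 2 ∈ Set.Ioo u w := ⟨by linarith, by linarith⟩
    have h1 := key _ (Set.Ioo_subset_Icc_self hmid)
    have h2 := h _ hmid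
    rw [h1] at h2; simpa using h2
  intro x hx
  rw [key x hx, hwv]; simp

end helpers

section CPL

/-- Near the right endpoint of its interval, a continuous piecewise linear map is
differentiable with constant derivative on a small left-neighbourhood. -/
lemma exists_const_deriv_left {n : ℕ} {u w : ℝ} {Q : ℝ → Fin n → ℝ} (huw : u < w)
    (hQ : ContPiecewiseLinearOn n (Set.Icc u w) Q) :
    ∃ ε > (0:ℝ), u ≤ w - ε ∧ ∃ v, ∀ x ∈ Set.Ioo (w - ε) w,
      DifferentiableAt ℝ Q x ∧ deriv Q x = v := by
  obtain ⟨hcont, ⟨hDsub, hdisc⟩, hloc⟩ := hQ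
  obtain ⟨ε₀, hε₀, h₀⟩ := hdisc w (Set.right_mem_Icc.2 huw.le)
  refine ⟨min ε₀ (w - u), lt_min hε₀ (by linarith), by
    have := min_le_right ε₀ (w - u); linarith, ?_⟩
  set ε := min ε₀ (w - u) with hεdef
  have hεpos : 0 < ε := lt_min hε₀ (by linarith)
  have hS : Set.Ioo (w - ε) w ⊆ Set.Icc u w \ NonDiffSet n (Set.Icc u w) Q := by
    rintro x ⟨hx1, hx2⟩
    have hwu : w - ε ≥ u := by have := min_le_right ε₀ (w - u); simp only [hεdef]; linarith
    refine ⟨⟨by linarith, hx2.le⟩, fun hxD => ?_⟩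
    have : x ∈ NonDiffSet n (Set.Icc u w) Q ∩ Set.Ioo (w - ε₀) (w + ε₀) := by
      refine ⟨hxD, ⟨?_, ?_⟩⟩
      · have := min_le_left ε₀ (w - u); simp only [hεdef] at hx1; linarith
      · linarith
    have := h₀ this
    simp only [Set.mem_singleton_iff] at this
    exact absurd this (by linarith)
  have hdiffS : ∀ x ∈ Set.Ioo (w - ε) w, DifferentiableAt ℝ Q x := by
    intro x hx
    have hx' := hS hx
    by_contra hnd
    exact hx'.2 ⟨hx'.1, Or.inr hnd⟩
  have hlc : ∀ x ∈ Set.Ioo (w - ε) w, ∃ δ > (0:ℝ),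
      ∀ y ∈ Set.Ioo (w - ε) w ∩ Set.Ioo (x - δ) (x + δ), deriv Q y = deriv Q x := by
    intro x hx
    obtain ⟨δ, hδ, hδc⟩ := hloc x (hS hx)
    exact ⟨δ, hδ, fun y hy => hδc y ⟨hS hy.1, hy.2⟩⟩
  have hmid : w - ε / 2 ∈ Set.Ioo (w - ε) w := ⟨by linarith, by linarith⟩
  exact ⟨deriv Q (w - ε / 2), fun x hx =>
    ⟨hdiffS x hx, const_of_locally_const hlc hmid x hx⟩⟩

/-- Near the left endpoint of its interval, a continuous piecewise linear map is
differentiable with constant derivative on a small right-neighbourhood. -/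
lemma exists_const_deriv_right {n : ℕ} {u w : ℝ} {Q : ℝ → Fin n → ℝ} (huw : u < w)
    (hQ : ContPiecewiseLinearOn n (Set.Icc u w) Q) :
    ∃ ε > (0:ℝ), u + ε ≤ w ∧ ∃ v, ∀ x ∈ Set.Ioo u (u + ε),
      DifferentiableAt ℝ Q x ∧ deriv Q x = v := by
  obtain ⟨hcont, ⟨hDsub, hdisc⟩, hloc⟩ := hQ
  obtain ⟨ε₀, hε₀, h₀⟩ := hdisc u (Set.left_mem_Icc.2 huw.le)
  refine ⟨min ε₀ (w - u), lt_min hε₀ (by linarith), by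
    have := min_le_right ε₀ (w - u); linarith, ?_⟩
  set ε := min ε₀ (w - u) with hεdef
  have hεpos : 0 < ε := lt_min hε₀ (by linarith)
  have hS : Set.Ioo u (u + ε) ⊆ Set.Icc u w \ NonDiffSet n (Set.Icc u w) Q := by
    rintro x ⟨hx1, hx2⟩
    have hwu : u + ε ≤ w := by have := min_le_right ε₀ (w - u); simp only [hεdef]; linarith
    refine ⟨⟨hx1.le, by linarith⟩, fun hxD => ?_⟩
    have : x ∈ NonDiffSet n (Set.Icc u w) Q ∩ Set.Ioo (u - ε₀) (u + ε₀) := by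
      refine ⟨hxD, ⟨by linarith, ?_⟩⟩
      have := min_le_left ε₀ (w - u); simp only [hεdef] at hx2; linarith
    have := h₀ this
    simp only [Set.mem_singleton_iff] at this
    exact absurd this (by linarith)
  have hdiffS : ∀ x ∈ Set.Ioo u (u + ε), DifferentiableAt ℝ Q x := by
    intro x hx
    have hx' := hS hx
    by_contra hnd
    exact hx'.2 ⟨hx'.1, Or.inr hnd⟩
  have hlc : ∀ x ∈ Set.Ioo u (u + ε), ∃ δ > (0:ℝ),
      ∀ y ∈ Set.Ioo u (u + ε) ∩ Set.Ioo (x - δ) (x + δ), deriv Q y = deriv Q x := by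
    intro x hx
    obtain ⟨δ, hδ, hδc⟩ := hloc x (hS hx)
    exact ⟨δ, hδ, fun y hy => hδc y ⟨hS hy.1, hy.2⟩⟩
  have hmid : u + ε / 2 ∈ Set.Ioo u (u + ε) := ⟨by linarith, by linarith⟩
  exact ⟨deriv Q (u + ε / 2), fun x hx =>
    ⟨hdiffS x hx, const_of_locally_const hlc hmid x hx⟩⟩

end CPL

/-- Lemma 4.3: two `n`-systems on `[a,b]` and `[b,c]` taking the value
`(b/n,…,b/n)` at `b` can be pasted into an `n`-system on `[a,c]`. -/
theorem nsystem_pasting (n : ℕ) (hn : 2 ≤ n) (a b c : ℝ)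
    (ha : 0 ≤ a) (hab : a < b) (hbc : b < c)
    (P₁ P₂ : ℝ → Fin n → ℝ)
    (hP₁ : IsNSystem n (Set.Icc a b) P₁) (hP₂ : IsNSystem n (Set.Icc b c) P₂)
    (hval₁ : ∀ i : Fin n, P₁ b i = b / n) (hval₂ : ∀ i : Fin n, P₂ b i = b / n) :
    ∃ P : ℝ → Fin n → ℝ, IsNSystem n (Set.Icc a c) P ∧
      (∀ q ∈ Set.Icc a b, ∀ i : Fin n, P q i = P₁ q i) ∧
      (∀ q ∈ Set.Icc b c, ∀ i : Fin n, P q i = P₂ q i) := by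
  classical
  have habc : a < c := hab.trans hbc
  set P : ℝ → Fin n → ℝ := fun q => if q ≤ b then P₁ q else P₂ q with hPdef
  have hPeq₁ : ∀ q, q ≤ b → P q = P₁ q := fun q hq => by
    simp only [hPdef]; rw [if_pos hq]
  have hP12b : P₁ b = P₂ b := funext fun i => by rw [hval₁ i, hval₂ i]
  have hPeq₂ : ∀ q, b ≤ q → P q = P₂ q := by
    intro q hq
    rcases eq_or_lt_of_le hq with h | h
    · rw [← h, hPeq₁ b le_rfl, hP12b]
    · simp only [hPdef]; rw [if_neg (not_le.2 h)]
  have hEv₁ : ∀ q, q < b → P =ᶠ[nhds q] P₁ := fun q hq =>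
    Filter.eventuallyEq_of_mem (Iio_mem_nhds hq) fun x hx => hPeq₁ x (le_of_lt hx)
  have hEv₂ : ∀ q, b < q → P =ᶠ[nhds q] P₂ := fun q hq =>
    Filter.eventuallyEq_of_mem (Ioi_mem_nhds hq) fun x hx => hPeq₂ x (le_of_lt hx)
  have hEvC₁ : ∀ q, q < b → ∀ j : Fin n, (fun x => P x j) =ᶠ[nhds q] fun x => P₁ x j :=
    fun q hq j => (hEv₁ q hq).mono fun x hx => congrFun hx j
  have hEvC₂ : ∀ q, b < q → ∀ j : Fin n, (fun x => P x j) =ᶠ[nhds q] fun x => P₂ x j :=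
    fun q hq j => (hEv₂ q hq).mono fun x hx => congrFun hx j
  have hcont : ContinuousOn P (Set.Icc a c) := by
    have hc₁ : ContinuousOn P (Set.Icc a b) := hP₁.1.1.congr fun x hx => hPeq₁ x hx.2
    have hc₂ : ContinuousOn P (Set.Icc b c) := hP₂.1.1.congr fun x hx => hPeq₂ x hx.1
    rw [← Set.Icc_union_Icc_eq_Icc hab.le hbc.le]
    intro x _
    have h1 : ContinuousWithinAt P (Set.Icc a b) x := by
      by_cases h : x ∈ Set.Icc a b
      · exact hc₁ x h
      · exact continuousWithinAt_of_notMem_closure (by rwa [isClosed_Icc.closure_eq])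
    have h2 : ContinuousWithinAt P (Set.Icc b c) x := by
      by_cases h : x ∈ Set.Icc b c
      · exact hc₂ x h
      · exact continuousWithinAt_of_notMem_closure (by rwa [isClosed_Icc.closure_eq])
    exact h1.union h2
  have hcontC : ∀ j : Fin n, ContinuousOn (fun x => P x j) (Set.Icc a c) :=
    fun j => (continuous_apply j).comp_continuousOn hcont
  have hprojD : ∀ (j : Fin n) (x : ℝ), DifferentiableAt ℝ P x →
      DifferentiableAt ℝ (fun y => P y j) x := fun j x h => differentiableAt_pi.1 h j
  have hND₁ : ∀ x ∈ NonDiffSet n (Set.Icc a c) P, x < b →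
      x ∈ NonDiffSet n (Set.Icc a b) P₁ := by
    rintro x ⟨hxI, hx⟩ hxb
    refine ⟨⟨hxI.1, hxb.le⟩, ?_⟩
    rcases hx with hf | hnd
    · rw [frontier_Icc habc.le] at hf
      simp only [Set.mem_insert_iff, Set.mem_singleton_iff] at hf
      rcases hf with rfl | rfl
      · left; rw [frontier_Icc hab.le]; simp
      · exact absurd hxb (by linarith)
    · right; exact fun h => hnd (((hEv₁ x hxb).differentiableAt_iff).2 h)
  have hND₂ : ∀ x ∈ NonDiffSet n (Set.Icc a c) P, b < x →
      x ∈ NonDiffSet n (Set.Icc b c) P₂ := by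
    rintro x ⟨hxI, hx⟩ hxb
    refine ⟨⟨hxb.le, hxI.2⟩, ?_⟩
    rcases hx with hf | hnd
    · rw [frontier_Icc habc.le] at hf
      simp only [Set.mem_insert_iff, Set.mem_singleton_iff] at hf
      rcases hf with rfl | rfl
      · exact absurd hxb (by linarith)
      · left; rw [frontier_Icc hbc.le]; simp
    · right; exact fun h => hnd (((hEv₂ x hxb).differentiableAt_iff).2 h)
  have hdisc : DiscreteIn (NonDiffSet n (Set.Icc a c) P) (Set.Icc a c) := by
    refine ⟨fun x hx => hx.1, ?_⟩
    intro q hq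
    rcases lt_trichotomy q b with hqb | rfl | hqb
    · obtain ⟨ε₁, hε₁, h₁⟩ := hP₁.1.2.1.2 q ⟨hq.1, hqb.le⟩
      refine ⟨min ε₁ (b - q), lt_min hε₁ (by linarith), ?_⟩
      rintro x ⟨hxD, hx1, hx2⟩
      have hmin1 := min_le_left ε₁ (b - q)
      have hmin2 := min_le_right ε₁ (b - q)
      have hxb : x < b := by linarith
      exact h₁ ⟨hND₁ x hxD hxb, ⟨by linarith, by linarith⟩⟩
    · obtain ⟨ε₁, hε₁, h₁⟩ := hP₁.1.2.1.2 q ⟨hab.le, le_rfl⟩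
      obtain ⟨ε₂, hε₂, h₂⟩ := hP₂.1.2.1.2 q ⟨le_rfl, hbc.le⟩
      refine ⟨min ε₁ ε₂, lt_min hε₁ hε₂, ?_⟩
      rintro x ⟨hxD, hx1, hx2⟩
      have hmin1 := min_le_left ε₁ ε₂
      have hmin2 := min_le_right ε₁ ε₂
      rcases lt_trichotomy x q with hxb | rfl | hxb
      · have := h₁ ⟨hND₁ x hxD hxb, ⟨by linarith, by linarith⟩⟩
        simp only [Set.mem_singleton_iff] at this
        exact absurd this (by linarith)
      · exact rfl
      · have := h₂ ⟨hND₂ x hxD hxb, ⟨by linarith, by linarith⟩⟩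
        simp only [Set.mem_singleton_iff] at this
        exact absurd this (by linarith)
    · obtain ⟨ε₂, hε₂, h₂⟩ := hP₂.1.2.1.2 q ⟨hqb.le, hq.2⟩
      refine ⟨min ε₂ (q - b), lt_min hε₂ (by linarith), ?_⟩
      rintro x ⟨hxD, hx1, hx2⟩
      have hmin1 := min_le_left ε₂ (q - b)
      have hmin2 := min_le_right ε₂ (q - b)
      have hxb : b < x := by linarith
      exact h₂ ⟨hND₂ x hxD hxb, ⟨by linarith, by linarith⟩⟩
  have hfr : ∀ x ∈ Set.Icc a c, x ∉ NonDiffSet n (Set.Icc a c) P →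
      (x ≠ a ∧ x ≠ c) ∧ DifferentiableAt ℝ P x := by
    intro x hx hnd
    constructor
    · constructor <;> rintro rfl <;>
        exact hnd ⟨hx, Or.inl (by rw [frontier_Icc habc.le]; simp)⟩
    · by_contra h; exact hnd ⟨hx, Or.inr h⟩
  have hloc : ∀ q ∈ Set.Icc a c \ NonDiffSet n (Set.Icc a c) P, ∃ ε > (0:ℝ),
      ∀ x ∈ (Set.Icc a c \ NonDiffSet n (Set.Icc a c) P) ∩ Set.Ioo (q - ε) (q + ε),
        deriv P x = deriv P q := by
    rintro q ⟨hqI, hqnd⟩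
    obtain ⟨⟨hqa, hqc⟩, hqdiff⟩ := hfr q hqI hqnd
    have hqa' : a < q := lt_of_le_of_ne hqI.1 (Ne.symm hqa)
    have hqc' : q < c := lt_of_le_of_ne hqI.2 hqc
    rcases lt_trichotomy q b with hqb | rfl | hqb
    · have hq₁ : q ∈ Set.Icc a b \ NonDiffSet n (Set.Icc a b) P₁ := by
        refine ⟨⟨hqI.1, hqb.le⟩, ?_⟩
        rintro ⟨-, h | h⟩
        · rw [frontier_Icc hab.le] at h
          simp only [Set.mem_insert_iff, Set.mem_singleton_iff] at h
          rcases h with rfl | rfl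
          · exact hqa rfl
          · exact absurd hqb (lt_irrefl _)
        · exact h (((hEv₁ q hqb).differentiableAt_iff).1 hqdiff)
      obtain ⟨ε₁, hε₁, h₁⟩ := hP₁.1.2.2 q hq₁
      refine ⟨min ε₁ (b - q), lt_min hε₁ (by linarith), ?_⟩
      rintro x ⟨⟨hxI, hxnd⟩, hx1, hx2⟩
      have hmin1 := min_le_left ε₁ (b - q)
      have hmin2 := min_le_right ε₁ (b - q)
      have hxb : x < b := by linarith
      obtain ⟨⟨hxa, hxc⟩, hxdiff⟩ := hfr x hxI hxnd
      have hx₁ : x ∈ Set.Icc a b \ NonDiffSet n (Set.Icc a b) P₁ := by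
        refine ⟨⟨hxI.1, hxb.le⟩, ?_⟩
        rintro ⟨-, h | h⟩
        · rw [frontier_Icc hab.le] at h
          simp only [Set.mem_insert_iff, Set.mem_singleton_iff] at h
          rcases h with rfl | rfl
          · exact hxa rfl
          · exact absurd hxb (lt_irrefl _)
        · exact h (((hEv₁ x hxb).differentiableAt_iff).1 hxdiff)
      have := h₁ x ⟨hx₁, ⟨by linarith, by linarith⟩⟩
      rw [(hEv₁ x hxb).deriv_eq, (hEv₁ q hqb).deriv_eq]
      exact this
    · obtain ⟨ε₁, hε₁p, hε₁a, v, hv⟩ := exists_const_deriv_left hab hP₁.1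
      obtain ⟨ε₂, hε₂p, hε₂c, w', hw⟩ := exists_const_deriv_right hbc hP₂.1
      have hvP : ∀ x ∈ Set.Ioo (q - ε₁) q, HasDerivAt P v x := by
        intro x hx
        have h := (hv x hx).1.hasDerivAt
        rw [(hv x hx).2] at h
        exact h.congr_of_eventuallyEq (hEv₁ x hx.2)
      have hwP : ∀ x ∈ Set.Ioo q (q + ε₂), HasDerivAt P w' x := by
        intro x hx
        have h := (hw x hx).1.hasDerivAt
        rw [(hw x hx).2] at h
        exact h.congr_of_eventuallyEq (hEv₂ x hx.1)
      have hv' : v = deriv P q := by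
        have hub : UniqueDiffWithinAt ℝ (Set.Icc (q - ε₁) q) q :=
          (uniqueDiffOn_Icc (by linarith)) q (Set.right_mem_Icc.2 (by linarith))
        have h1 := (hasDerivWithinAt_right_of_deriv_const (by linarith)
          (hcont.mono (Set.Icc_subset_Icc hε₁a hbc.le)) hvP).derivWithin hub
        have h2 := ((hqdiff.hasDerivAt).hasDerivWithinAt
          (s := Set.Icc (q - ε₁) q)).derivWithin hub
        rw [← h1, h2]
      have hw' : w' = deriv P q := by
        have hub : UniqueDiffWithinAt ℝ (Set.Icc q (q + ε₂)) q :=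
          (uniqueDiffOn_Icc (by linarith)) q (Set.left_mem_Icc.2 (by linarith))
        have h1 := (hasDerivWithinAt_left_of_deriv_const (by linarith)
          (hcont.mono (Set.Icc_subset_Icc hab.le hε₂c)) hwP).derivWithin hub
        have h2 := ((hqdiff.hasDerivAt).hasDerivWithinAt
          (s := Set.Icc q (q + ε₂))).derivWithin hub
        rw [← h1, h2]
      refine ⟨min ε₁ ε₂, lt_min hε₁p hε₂p, ?_⟩
      rintro x ⟨-, hx1, hx2⟩
      have hmin1 := min_le_left ε₁ ε₂
      have hmin2 := min_le_right ε₁ ε₂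
      rcases lt_trichotomy x q with hxb | rfl | hxb
      · rw [(hvP x ⟨by linarith, hxb⟩).deriv]; exact hv'
      · rfl
      · rw [(hwP x ⟨hxb, by linarith⟩).deriv]; exact hw'
    · have hq₂ : q ∈ Set.Icc b c \ NonDiffSet n (Set.Icc b c) P₂ := by
        refine ⟨⟨hqb.le, hqI.2⟩, ?_⟩
        rintro ⟨-, h | h⟩
        · rw [frontier_Icc hbc.le] at h
          simp only [Set.mem_insert_iff, Set.mem_singleton_iff] at h
          rcases h with rfl | rfl
          · exact absurd hqb (lt_irrefl _)
          · exact hqc rfl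
        · exact h (((hEv₂ q hqb).differentiableAt_iff).1 hqdiff)
      obtain ⟨ε₂, hε₂, h₂⟩ := hP₂.1.2.2 q hq₂
      refine ⟨min ε₂ (q - b), lt_min hε₂ (by linarith), ?_⟩
      rintro x ⟨⟨hxI, hxnd⟩, hx1, hx2⟩
      have hmin1 := min_le_left ε₂ (q - b)
      have hmin2 := min_le_right ε₂ (q - b)
      have hxb : b < x := by linarith
      obtain ⟨⟨hxa, hxc⟩, hxdiff⟩ := hfr x hxI hxnd
      have hx₂ : x ∈ Set.Icc b c \ NonDiffSet n (Set.Icc b c) P₂ := by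
        refine ⟨⟨hxb.le, hxI.2⟩, ?_⟩
        rintro ⟨-, h | h⟩
        · rw [frontier_Icc hbc.le] at h
          simp only [Set.mem_insert_iff, Set.mem_singleton_iff] at h
          rcases h with rfl | rfl
          · exact absurd hxb (lt_irrefl _)
          · exact hxc rfl
        · exact h (((hEv₂ x hxb).differentiableAt_iff).1 hxdiff)
      have := h₂ x ⟨hx₂, ⟨by linarith, by linarith⟩⟩
      rw [(hEv₂ x hxb).deriv_eq, (hEv₂ q hqb).deriv_eq]
      exact this
  have hS1 : ∀ q ∈ Set.Icc a c, ((∀ i, 0 ≤ P q i) ∧ Monotone (P q)) ∧ ∑ i, P q i = q := by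
    intro q hq
    by_cases hqb : q ≤ b
    · rw [hPeq₁ q hqb]; exact hP₁.2.1 q ⟨hq.1, hqb⟩
    · push_neg at hqb
      rw [hPeq₂ q hqb.le]; exact hP₂.2.1 q ⟨hqb.le, hq.2⟩
  have hS2 : ∀ a' b' : ℝ, a' < b' → Set.Ioo a' b' ⊆ Set.Icc a c →
      (∀ q ∈ Set.Ioo a' b', DifferentiableAt ℝ P q) →
      ∃ r : Fin n, (∀ q ∈ Set.Ioo a' b', deriv (fun x => P x r) q = 1) ∧
        ∀ j : Fin n, j ≠ r → ∀ p ∈ Set.Ioo a' b', ∀ q ∈ Set.Ioo a' b', P p j = P q j := by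
    intro a' b' hab' hsub hdiff
    rcases le_or_gt b' b with hb'b | hbb'
    · have hsub₁ : Set.Ioo a' b' ⊆ Set.Icc a b := fun x hx =>
        ⟨(hsub hx).1, le_trans hx.2.le hb'b⟩
      have hd₁ : ∀ q ∈ Set.Ioo a' b', DifferentiableAt ℝ P₁ q := fun q hq =>
        ((hEv₁ q (lt_of_lt_of_le hq.2 hb'b)).differentiableAt_iff).1 (hdiff q hq)
      obtain ⟨r, hr1, hr2⟩ := hP₁.2.2.1 a' b' hab' hsub₁ hd₁
      refine ⟨r, fun q hq => ?_, fun j hj p hp q hq => ?_⟩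
      · rw [(hEvC₁ q (lt_of_lt_of_le hq.2 hb'b) r).deriv_eq]; exact hr1 q hq
      · rw [congrFun (hPeq₁ p (le_trans hp.2.le hb'b)) j,
            congrFun (hPeq₁ q (le_trans hq.2.le hb'b)) j]
        exact hr2 j hj p hp q hq
    rcases le_or_gt b a' with hba' | ha'b
    · have hsub₂ : Set.Ioo a' b' ⊆ Set.Icc b c := fun x hx =>
        ⟨le_trans hba' hx.1.le, (hsub hx).2⟩
      have hd₂ : ∀ q ∈ Set.Ioo a' b', DifferentiableAt ℝ P₂ q := fun q hq =>
        ((hEv₂ q (lt_of_le_of_lt hba' hq.1)).differentiableAt_iff).1 (hdiff q hq)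
      obtain ⟨r, hr1, hr2⟩ := hP₂.2.2.1 a' b' hab' hsub₂ hd₂
      refine ⟨r, fun q hq => ?_, fun j hj p hp q hq => ?_⟩
      · rw [(hEvC₂ q (lt_of_le_of_lt hba' hq.1) r).deriv_eq]; exact hr1 q hq
      · rw [congrFun (hPeq₂ p (le_trans hba' hp.1.le)) j,
            congrFun (hPeq₂ q (le_trans hba' hq.1.le)) j]
        exact hr2 j hj p hp q hq
    · have hbmem : b ∈ Set.Ioo a' b' := ⟨ha'b, hbb'⟩
      have hdiffb := hdiff b hbmem
      set m₁ := (a' + b) / 2 with hm₁def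
      set m₂ := (b + b') / 2 with hm₂def
      have hm₁ : m₁ ∈ Set.Ioo a' b := ⟨by simp only [hm₁def]; linarith,
        by simp only [hm₁def]; linarith⟩
      have hm₂ : m₂ ∈ Set.Ioo b b' := ⟨by simp only [hm₂def]; linarith,
        by simp only [hm₂def]; linarith⟩
      have hm₁I : m₁ ∈ Set.Ioo a' b' := ⟨hm₁.1, hm₁.2.trans hbb'⟩
      have hm₂I : m₂ ∈ Set.Ioo a' b' := ⟨ha'b.trans hm₂.1, hm₂.2⟩
      have ham₁ : a ≤ m₁ := (hsub hm₁I).1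
      have hm₂c : m₂ ≤ c := (hsub hm₂I).2
      have hsubL : Set.Ioo a' b ⊆ Set.Icc a b := fun x hx =>
        ⟨(hsub ⟨hx.1, hx.2.trans hbb'⟩).1, hx.2.le⟩
      have hsubR : Set.Ioo b b' ⊆ Set.Icc b c := fun x hx =>
        ⟨hx.1.le, (hsub ⟨ha'b.trans hx.1, hx.2⟩).2⟩
      have hdL : ∀ q ∈ Set.Ioo a' b, DifferentiableAt ℝ P₁ q := fun q hq =>
        ((hEv₁ q hq.2).differentiableAt_iff).1 (hdiff q ⟨hq.1, hq.2.trans hbb'⟩)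
      have hdR : ∀ q ∈ Set.Ioo b b', DifferentiableAt ℝ P₂ q := fun q hq =>
        ((hEv₂ q hq.1).differentiableAt_iff).1 (hdiff q ⟨ha'b.trans hq.1, hq.2⟩)
      obtain ⟨r₁, hr₁d, hr₁c⟩ := hP₁.2.2.1 a' b ha'b hsubL hdL
      obtain ⟨r₂, hr₂d, hr₂c⟩ := hP₂.2.2.1 b b' hbb' hsubR hdR
      have hPr₁L : ∀ x ∈ Set.Ioo m₁ b, HasDerivAt (fun y => P y r₁) 1 x := by
        intro x hx
        have hxI : x ∈ Set.Ioo a' b' := ⟨hm₁.1.trans hx.1, hx.2.trans hbb'⟩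
        have hd := hprojD r₁ x (hdiff x hxI)
        have heq : deriv (fun y => P y r₁) x = 1 := by
          rw [(hEvC₁ x hx.2 r₁).deriv_eq]; exact hr₁d x ⟨hm₁.1.trans hx.1, hx.2⟩
        exact heq ▸ hd.hasDerivAt
      have hderivb₁ : deriv (fun y => P y r₁) b = 1 := by
        have hub : UniqueDiffWithinAt ℝ (Set.Icc m₁ b) b :=
          (uniqueDiffOn_Icc hm₁.2) b (Set.right_mem_Icc.2 hm₁.2.le)
        have h1 := (hasDerivWithinAt_right_of_deriv_const hm₁.2
          ((hcontC r₁).mono (Set.Icc_subset_Icc ham₁ hbc.le)) hPr₁L).derivWithin hub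
        have h2 := (((hprojD r₁ b hdiffb).hasDerivAt).hasDerivWithinAt
          (s := Set.Icc m₁ b)).derivWithin hub
        rw [← h2]; exact h1
      have hconstR : ∀ j : Fin n,
          (∀ p ∈ Set.Ioo b b', ∀ q ∈ Set.Ioo b b', P₂ p j = P₂ q j) →
          deriv (fun y => P y j) b = 0 := by
        intro j hcj
        have hPj : ∀ x ∈ Set.Ioo b m₂, HasDerivAt (fun y => P y j) 0 x := by
          intro x hx
          have hxR : x ∈ Set.Ioo b b' := ⟨hx.1, hx.2.trans hm₂.2⟩
          have hEvconst : (fun y => P y j) =ᶠ[nhds x] fun _ => P₂ m₂ j := by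
            refine Filter.eventuallyEq_of_mem (isOpen_Ioo.mem_nhds hxR) fun y hy => ?_
            rw [congrFun (hPeq₂ y hy.1.le) j]
            exact hcj y hy m₂ hm₂
          exact (hasDerivAt_const x (P₂ m₂ j)).congr_of_eventuallyEq hEvconst
        have hub : UniqueDiffWithinAt ℝ (Set.Icc b m₂) b :=
          (uniqueDiffOn_Icc hm₂.1) b (Set.left_mem_Icc.2 hm₂.1.le)
        have h1 := (hasDerivWithinAt_left_of_deriv_const hm₂.1
          ((hcontC j).mono (Set.Icc_subset_Icc hab.le hm₂c)) hPj).derivWithin hub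
        have h2 := (((hprojD j b hdiffb).hasDerivAt).hasDerivWithinAt
          (s := Set.Icc b m₂)).derivWithin hub
        rw [← h2]; exact h1
      have hr12 : r₂ = r₁ := by
        by_contra hne
        have h0 := hconstR r₁ (hr₂c r₁ fun h => hne h.symm)
        rw [hderivb₁] at h0
        exact one_ne_zero h0
      subst hr12
      refine ⟨r₂, fun q hq => ?_, fun j hj p hp q hq => ?_⟩
      · rcases lt_trichotomy q b with hqb | rfl | hqb
        · rw [(hEvC₁ q hqb r₂).deriv_eq]; exact hr₁d q ⟨hq.1, hqb⟩
        · exact hderivb₁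
        · rw [(hEvC₂ q hqb r₂).deriv_eq]; exact hr₂d q ⟨hqb, hq.2⟩
      · have hvalL : ∀ p ∈ Set.Ioo a' b, P p j = P₁ m₁ j := fun p hp => by
          rw [congrFun (hPeq₁ p hp.2.le) j]; exact hr₁c j hj p hp m₁ hm₁
        have hvalR : ∀ p ∈ Set.Ioo b b', P p j = P₂ m₂ j := fun p hp => by
          rw [congrFun (hPeq₂ p hp.1.le) j]; exact hr₂c j hj p hp m₂ hm₂
        have hbL : P b j = P₁ m₁ j :=
          eq_endpoint_of_const_Ioo hm₁.2
            ((hcontC j).mono (Set.Icc_subset_Icc ham₁ hbc.le))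
            (fun x hx => hvalL x ⟨hm₁.1.trans hx.1, hx.2⟩) b (Set.right_mem_Icc.2 hm₁.2.le)
        have hbR : P b j = P₂ m₂ j :=
          eq_endpoint_of_const_Ioo hm₂.1
            ((hcontC j).mono (Set.Icc_subset_Icc hab.le hm₂c))
            (fun x hx => hvalR x ⟨hx.1, hx.2.trans hm₂.2⟩) b (Set.left_mem_Icc.2 hm₂.1.le)
        have key : ∀ p ∈ Set.Ioo a' b', P p j = P b j := by
          intro p hp
          rcases lt_trichotomy p b with hpb | rfl | hpb
          · rw [hvalL p ⟨hp.1, hpb⟩, hbL]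
          · rfl
          · rw [hvalR p ⟨hpb, hp.2⟩, hbR]
        rw [key p hp, key q hq]
  have hS3 : ∀ q ∈ interior (Set.Icc a c), ¬DifferentiableAt ℝ P q →
      ∀ r s : Fin n, derivWithin (fun x => P x r) (Set.Iic q) q = 1 →
        derivWithin (fun x => P x s) (Set.Ici q) q = 1 → r < s →
        ∀ i : Fin n, r ≤ i → i ≤ s → P q i = P q r := by
    intro q hq hnd r s hrd hsd hrs i hri his
    rw [interior_Icc] at hq
    rcases lt_trichotomy q b with hqb | rfl | hqb
    · have hq₁ : q ∈ interior (Set.Icc a b) := by rw [interior_Icc]; exact ⟨hq.1, hqb⟩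
      have hnd₁ : ¬DifferentiableAt ℝ P₁ q := fun h =>
        hnd (((hEv₁ q hqb).differentiableAt_iff).2 h)
      have hrd₁ : derivWithin (fun x => P₁ x r) (Set.Iic q) q = 1 := by
        rw [← Filter.EventuallyEq.derivWithin_eq
          ((hEvC₁ q hqb r).filter_mono nhdsWithin_le_nhds) (congrFun (hPeq₁ q hqb.le) r)]
        exact hrd
      have hsd₁ : derivWithin (fun x => P₁ x s) (Set.Ici q) q = 1 := by
        rw [← Filter.EventuallyEq.derivWithin_eq
          ((hEvC₁ q hqb s).filter_mono nhdsWithin_le_nhds) (congrFun (hPeq₁ q hqb.le) s)]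
        exact hsd
      have := hP₁.2.2.2 q hq₁ hnd₁ r s hrd₁ hsd₁ hrs i hri his
      rw [congrFun (hPeq₁ q hqb.le) i, congrFun (hPeq₁ q hqb.le) r]
      exact this
    · rw [congrFun (hPeq₁ q le_rfl) i, congrFun (hPeq₁ q le_rfl) r, hval₁, hval₁]
    · have hq₂ : q ∈ interior (Set.Icc b c) := by rw [interior_Icc]; exact ⟨hqb, hq.2⟩
      have hnd₂ : ¬DifferentiableAt ℝ P₂ q := fun h =>
        hnd (((hEv₂ q hqb).differentiableAt_iff).2 h)
      have hrd₂ : derivWithin (fun x => P₂ x r) (Set.Iic q) q = 1 := by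
        rw [← Filter.EventuallyEq.derivWithin_eq
          ((hEvC₂ q hqb r).filter_mono nhdsWithin_le_nhds) (congrFun (hPeq₂ q hqb.le) r)]
        exact hrd
      have hsd₂ : derivWithin (fun x => P₂ x s) (Set.Ici q) q = 1 := by
        rw [← Filter.EventuallyEq.derivWithin_eq
          ((hEvC₂ q hqb s).filter_mono nhdsWithin_le_nhds) (congrFun (hPeq₂ q hqb.le) s)]
        exact hsd
      have := hP₂.2.2.2 q hq₂ hnd₂ r s hrd₂ hsd₂ hrs i hri his
      rw [congrFun (hPeq₂ q hqb.le) i, congrFun (hPeq₂ q hqb.le) r]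
      exact this
  exact ⟨P, ⟨⟨hcont, hdisc, hloc⟩, hS1, hS2, hS3⟩,
    fun q hq i => congrFun (hPeq₁ q hq.2) i,
    fun q hq i => congrFun (hPeq₂ q hq.1) i⟩

end
end

section
/- Let n ≥ 2 be an integer and let a = (a₁, …, a_n) ∈ Δ^(n). There exists a generalized n-system P on the interval [na₁, na_n] such that, for each j = 1, …, n−1, the infimum of ψ_j(q^{−1}P(q)) over q ∈ [na₁, na_n] equals ψ_j(a) and the supremum of ψ_j(q^{−1}P(q)) over q ∈ [na₁, na_n] equals j/n. -/
noncomputable section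

/-- `ψ_j(a) = a₁ + ⋯ + a_j` (sum of the first `j` coordinates). -/
def psiSum (m j : ℕ) (x : Fin m → ℝ) : ℝ := ∑ i : Fin m, if (i : ℕ) < j then x i else 0

/-- The closed simplex `Δ̄⁽ᵐ⁾ = {a : 0 ≤ a₁ ≤ ⋯ ≤ a_m, a₁ + ⋯ + a_m = 1}`. -/
def DeltaBar (m : ℕ) : Set (Fin m → ℝ) :=
  {a | (∀ i, 0 ≤ a i) ∧ Monotone a ∧ ∑ i, a i = 1}

/-- The open simplex `Δ⁽ᵐ⁾ = {a : 0 < a₁ < ⋯ < a_m, a₁ + ⋯ + a_m = 1}`. -/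
def DeltaStrict (m : ℕ) : Set (Fin m → ℝ) :=
  {a | (∀ i, 0 < a i) ∧ StrictMono a ∧ ∑ i, a i = 1}

set_option linter.unusedSectionVars false
open Topology

namespace GenNSys

variable (n : ℕ) (a : Fin n → ℝ)

/-- extension of `a` to all of `ℕ`, constant past `n-1`. -/
def ae (i : ℕ) : ℝ := if h : i < n then a ⟨i, h⟩ else if h' : 0 < n then a ⟨n-1, by omega⟩ else 0

def T (k : ℕ) : ℝ := ∑ i ∈ Finset.range k, ae n a i

def al : ℝ := n * ae n a 0

variable {n a}
variable (hn : 2 ≤ n) (ha : a ∈ DeltaStrict n)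

lemma ae_eq {i : ℕ} (h : i < n) : ae n a i = a ⟨i, h⟩ := dif_pos h

include hn ha in
lemma ae_pos (i : ℕ) : 0 < ae n a i := by
  unfold ae
  split_ifs with h h'
  · exact ha.1 _
  · exact ha.1 _
  · omega

include hn ha in
lemma ae_mono {i j : ℕ} (hij : i ≤ j) : ae n a i ≤ ae n a j := by
  have h0 : 0 < n := by omega
  have hmono := ha.2.1.monotone
  unfold ae
  simp only [dif_pos h0]
  split_ifs with h h'
  · exact hmono (by simp [Fin.le_def]; omega)
  · exact hmono (by simp [Fin.le_def]; omega)
  · omega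
  · exact le_refl _

include hn ha in
lemma ae_strict {i j : ℕ} (hij : i < j) (hj : j < n) : ae n a i < ae n a j := by
  rw [ae_eq (lt_trans hij hj), ae_eq hj]
  exact ha.2.1 (by simp [Fin.lt_def]; omega)

lemma T_succ (k : ℕ) : T n a (k+1) = T n a k + ae n a k := Finset.sum_range_succ _ _

lemma T_zero : T n a 0 = 0 := rfl

include hn ha in
include hn ha in
lemma T_nonneg (k : ℕ) : 0 ≤ T n a k :=
  Finset.sum_nonneg fun i _ => (ae_pos hn ha i).le

include hn ha in
lemma T_n : T n a n = 1 := by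
  unfold T
  rw [← ha.2.2, ← Fin.sum_univ_eq_sum_range]
  exact Finset.sum_congr rfl fun i _ => by rw [ae_eq i.isLt]

include hn ha in
lemma T_mono {k l : ℕ} (h : k ≤ l) : T n a k ≤ T n a l := by
  unfold T
  exact Finset.sum_le_sum_of_subset_of_nonneg (Finset.range_subset_range.2 h)
    (fun i _ _ => (ae_pos hn ha i).le)

include hn ha in
lemma T_le_one {k : ℕ} (h : k ≤ n) : T n a k ≤ 1 := by
  rw [← T_n hn ha]; exact T_mono hn ha h

include hn ha in
lemma T_le_mul {k m : ℕ} (h : k ≤ m + 1) : T n a k ≤ k * ae n a m := by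
  unfold T
  calc ∑ i ∈ Finset.range k, ae n a i ≤ ∑ _i ∈ Finset.range k, ae n a m :=
        Finset.sum_le_sum fun i hi => ae_mono hn ha (by simp at hi; omega)
    _ = k * ae n a m := by rw [Finset.sum_const, Finset.card_range, nsmul_eq_mul]

include hn ha in
lemma T_avg {j K : ℕ} (h : j ≤ K) : (K : ℝ) * T n a j ≤ (j : ℝ) * T n a K := by
  have h1 : T n a K = T n a j + ∑ i ∈ Finset.Ico j K, ae n a i := by
    unfold T
    rw [Finset.sum_Ico_eq_sub _ h]
    ring
  have h2 : (K - j : ℕ) • ae n a j ≤ ∑ i ∈ Finset.Ico j K, ae n a i := by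
    apply Finset.card_nsmul_le_sum _ _ _ ?_ |>.trans_eq' (by rw [Nat.card_Ico])
    intro i hi
    exact ae_mono hn ha (Finset.mem_Ico.1 hi).1
  have h3 : T n a j ≤ j * ae n a j := T_le_mul hn ha (by omega)
  have h4 : ((K - j : ℕ) : ℝ) = (K : ℝ) - j := by
    rw [Nat.cast_sub h]
  rw [nsmul_eq_mul, h4] at h2
  have hj : (0:ℝ) ≤ j := Nat.cast_nonneg j
  have hKj : (0:ℝ) ≤ (K:ℝ) - j := by
    have := Nat.cast_le (α := ℝ) |>.2 h; linarith
  nlinarith [T_nonneg hn ha j]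

include hn ha in
lemma T_tail {m K : ℕ} (hm : m ≤ K) (hK : K ≤ n) :
    ((n : ℝ) - K) * ae n a m ≤ 1 - T n a K := by
  have h1 : 1 - T n a K = ∑ i ∈ Finset.Ico K n, ae n a i := by
    rw [← T_n hn ha]; unfold T
    rw [Finset.sum_Ico_eq_sub _ hK]
  have h2 : (n - K : ℕ) • ae n a m ≤ ∑ i ∈ Finset.Ico K n, ae n a i := by
    apply Finset.card_nsmul_le_sum _ _ _ ?_ |>.trans_eq' (by rw [Nat.card_Ico])
    intro i hi
    exact ae_mono hn ha (le_trans hm (Finset.mem_Ico.1 hi).1)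
  rw [nsmul_eq_mul, Nat.cast_sub hK] at h2
  linarith

include hn ha in
lemma T_gap {K j m : ℕ} (hK : K ≤ j) (hj : j ≤ m + 1) :
    T n a j - T n a K ≤ ((j : ℝ) - K) * ae n a m := by
  have h1 : T n a j - T n a K = ∑ i ∈ Finset.Ico K j, ae n a i := by
    unfold T; rw [Finset.sum_Ico_eq_sub _ hK]
  have h2 : ∑ i ∈ Finset.Ico K j, ae n a i ≤ (j - K : ℕ) • ae n a m := by
    apply Finset.sum_le_card_nsmul _ _ _ ?_ |>.trans_eq (by rw [Nat.card_Ico])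
    intro i hi
    exact ae_mono hn ha (by have := (Finset.mem_Ico.1 hi).2; omega)
  rw [nsmul_eq_mul, Nat.cast_sub hK] at h2
  linarith

include hn ha in
lemma al_pos : 0 < al n a := by
  unfold al
  have := ae_pos hn ha 0
  positivity

include hn ha in
lemma al_lt_one : al n a < 1 := by
  unfold al
  rw [← T_n hn ha]
  unfold T
  have : (n : ℝ) * ae n a 0 = ∑ _i ∈ Finset.range n, ae n a 0 := by
    rw [Finset.sum_const, Finset.card_range, nsmul_eq_mul]
  rw [this]
  apply Finset.sum_lt_sum
  · intro i _; exact ae_mono hn ha (Nat.zero_le i)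
  · exact ⟨1, by simp; omega, ae_strict hn ha one_pos (by omega)⟩

include hn ha in
lemma psiSum_eq_T {k : ℕ} (h : k ≤ n) : psiSum n k a = T n a k := by
  unfold psiSum T
  have h1 : ∑ i : Fin n, (if (i:ℕ) < k then a i else 0)
      = ∑ i ∈ Finset.range n, (if i < k then ae n a i else 0) := by
    rw [← Fin.sum_univ_eq_sum_range (fun m => if m < k then ae n a m else 0)]
    exact Finset.sum_congr rfl fun i _ => by
      by_cases hik : (i:ℕ) < k <;> simp [hik, ae_eq i.isLt]
  rw [h1, ← Finset.sum_filter]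
  congr 1
  ext i
  simp only [Finset.mem_filter, Finset.mem_range]
  omega

variable (n a) in
def cc (k : ℕ) (q : ℝ) : ℝ := (q - al n a * (1 - T n a (k+1))) / (k+1)

variable (n a) in
def tt (k : ℕ) : ℝ :=
  if k < n then al n a * ((k+1) * ae n a k + 1 - T n a (k+1)) else n * ae n a (n-1)

variable (n a) in
def hh (q : ℝ) : ℝ :=
  if h : 0 < n then (Finset.range n).inf' (Finset.nonempty_range_iff.mpr h.ne') (fun k => cc n a k q) else 0

variable (n a) in
def PP (q : ℝ) (i : Fin n) : ℝ := max (al n a * a i) (hh n a q)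

include hn in
lemma tt_zero : tt n a 0 = al n a := by
  have h0 : 0 < n := by omega
  unfold tt
  rw [if_pos h0, T_succ, T_zero]
  ring

lemma tt_top : tt n a n = n * ae n a (n-1) := by unfold tt; rw [if_neg (by omega)]

lemma cc_tt_self {k : ℕ} (hk : k < n) : cc n a k (tt n a k) = al n a * ae n a k := by
  unfold cc tt
  rw [if_pos hk]
  have : ((k:ℝ) + 1) ≠ 0 := by positivity
  field_simp
  ring

lemma cc_tt_succ {k : ℕ} (hk : k + 1 < n) :
    cc n a k (tt n a (k+1)) = al n a * ae n a (k+1) := by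
  unfold cc tt
  rw [if_pos hk, T_succ (n:=n) (a:=a) (k+1)]
  have : ((k:ℝ) + 1) ≠ 0 := by positivity
  push_cast
  field_simp
  ring

include hn ha in
lemma cc_last (q : ℝ) : cc n a (n-1) q = q / n := by
  unfold cc
  have h1 : n - 1 + 1 = n := by omega
  rw [h1, T_n hn ha]
  have : ((n-1 : ℕ) : ℝ) + 1 = (n : ℝ) := by
    have : ((n-1 : ℕ) : ℝ) = (n:ℝ) - 1 := by rw [Nat.cast_sub (by omega)]; simp
    rw [this]; ring
  rw [this]
  ring

lemma cc_mono_q {k : ℕ} {q q' : ℝ} (h : q ≤ q') : cc n a k q ≤ cc n a k q' := by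
  unfold cc
  gcongr

lemma cc_succ_sub {m : ℕ} (hm : m + 1 < n) (q : ℝ) :
    cc n a (m+1) q - cc n a m q = (tt n a (m+1) - q) / (((m:ℝ)+1) * ((m:ℝ)+2)) := by
  unfold cc tt
  rw [if_pos hm, T_succ (n:=n) (a:=a) (m+1)]
  have h1 : ((m:ℝ) + 1) ≠ 0 := by positivity
  have h2 : ((m:ℝ) + 2) ≠ 0 := by positivity
  push_cast
  field_simp
  ring

include hn ha in
lemma tt_step {k : ℕ} (hk : k < n) : tt n a k < tt n a (k+1) := by
  rcases lt_or_eq_of_le (Nat.succ_le_of_lt hk) with h | h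
  · unfold tt
    rw [if_pos hk, if_pos h, T_succ (n:=n) (a:=a) (k+1)]
    have h3 := al_pos hn ha
    have h4 := ae_strict hn ha (Nat.lt_succ_self k) h
    have h5 : (0:ℝ) ≤ (k:ℝ) := Nat.cast_nonneg k
    simp only [Nat.succ_eq_add_one] at *
    push_cast
    nlinarith [mul_pos h3 (sub_pos.2 h4)]
  · unfold tt
    simp only [Nat.succ_eq_add_one] at h
    rw [if_pos hk, if_neg (by omega)]
    have h5 : T n a (k+1) = 1 := by rw [h, T_n hn ha]
    have hkn : k = n - 1 := by omega
    rw [h5, hkn]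
    have h6 : ((n-1:ℕ):ℝ) + 1 = (n:ℝ) := by rw [Nat.cast_sub (by omega)]; push_cast; ring
    rw [h6]
    have h7 := al_lt_one hn ha
    have h8 := al_pos hn ha
    have h9 := ae_pos hn ha (n-1)
    have h10 : (0:ℝ) < n := by positivity
    nlinarith [mul_pos h10 h9]

include hn ha in
lemma tt_le {k l : ℕ} (h : k ≤ l) : tt n a k ≤ tt n a l := by
  induction l, h using Nat.le_induction with
  | base => exact le_refl _
  | succ l hl ih =>
    rcases lt_or_ge l n with h' | h'
    · exact ih.trans (tt_step hn ha h').le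
    · have : tt n a (l+1) = tt n a l := by unfold tt; rw [if_neg (by omega), if_neg (by omega)]
      rw [this]; exact ih

include hn ha in
lemma cc_min {k : ℕ} (hk : k < n) {q : ℝ} (hq1 : tt n a k ≤ q) (hq2 : q ≤ tt n a (k+1))
    {m : ℕ} (hm : m < n) : cc n a k q ≤ cc n a m q := by
  rcases le_or_gt k m with h | h
  · induction m, h using Nat.le_induction with
    | base => exact le_refl _
    | succ m hm' ih =>
      have hmn : m < n := by omega
      have step : cc n a m q ≤ cc n a (m+1) q := by
        have hdiff := cc_succ_sub (n := n) (a := a) (by omega : m + 1 < n) q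
        have h2 : q ≤ tt n a (m+1) := hq2.trans (tt_le hn ha (by omega))
        have hpos : (0:ℝ) < ((m:ℝ)+1) * ((m:ℝ)+2) := by positivity
        have h3 : 0 ≤ (tt n a (m+1) - q) / (((m:ℝ)+1) * ((m:ℝ)+2)) :=
          div_nonneg (by linarith) hpos.le
        linarith
      exact (ih hmn).trans step
  · -- m < k
    clear hm
    have key : ∀ d m', m' + d = k → cc n a k q ≤ cc n a m' q := by
      intro d
      induction d with
      | zero => intro m' hm'; rw [show m' = k by omega]
      | succ d ih =>
        intro m' hm'
        have h1 : cc n a k q ≤ cc n a (m'+1) q := ih (m'+1) (by omega)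
        have h2 : cc n a (m'+1) q ≤ cc n a m' q := by
          have hdiff := cc_succ_sub (n := n) (a := a) (by omega : m' + 1 < n) q
          have h3 : tt n a (m'+1) ≤ q := le_trans (tt_le hn ha (by omega : m'+1 ≤ k)) hq1
          have hpos : (0:ℝ) < ((m':ℝ)+1) * ((m':ℝ)+2) := by positivity
          have h4 : (tt n a (m'+1) - q) / (((m':ℝ)+1) * ((m':ℝ)+2)) ≤ 0 :=
            div_nonpos_of_nonpos_of_nonneg (by linarith) hpos.le
          linarith
        exact h1.trans h2
    exact key (k - m) m (by omega)

include hn ha in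
lemma hh_eq {k : ℕ} (hk : k < n) {q : ℝ} (hq1 : tt n a k ≤ q) (hq2 : q ≤ tt n a (k+1)) :
    hh n a q = cc n a k q := by
  unfold hh
  rw [dif_pos (by omega : 0 < n)]
  apply le_antisymm
  · exact Finset.inf'_le _ (Finset.mem_range.2 hk)
  · apply Finset.le_inf'
    intro m hm
    exact cc_min hn ha hk hq1 hq2 (Finset.mem_range.1 hm)

include hn ha in
lemma PP_phase {k : ℕ} (hk : k < n) {q : ℝ} (hq : q ∈ Set.Icc (tt n a k) (tt n a (k+1)))
    (i : Fin n) :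
    PP n a q i = if (i:ℕ) ≤ k then cc n a k q else al n a * a i := by
  unfold PP
  rw [hh_eq hn ha hk hq.1 hq.2]
  split_ifs with h
  · apply max_eq_right
    calc al n a * a i = al n a * ae n a i := by rw [ae_eq i.isLt]
      _ ≤ al n a * ae n a k := by
          have := ae_mono hn ha h
          have := al_pos hn ha
          nlinarith
      _ = cc n a k (tt n a k) := (cc_tt_self hk).symm
      _ ≤ cc n a k q := cc_mono_q hq.1
  · apply max_eq_left
    have hk1 : k + 1 < n := by have := i.isLt; omega
    calc cc n a k q ≤ cc n a k (tt n a (k+1)) := cc_mono_q hq.2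
      _ = al n a * ae n a (k+1) := cc_tt_succ hk1
      _ ≤ al n a * ae n a i := by
          have := ae_mono hn ha (by omega : k + 1 ≤ (i:ℕ))
          have := al_pos hn ha
          nlinarith
      _ = al n a * a i := by rw [ae_eq i.isLt]

include hn ha in
lemma sum_phase {k : ℕ} (hk : k < n) (x : ℝ) :
    ∑ i : Fin n, (if (i:ℕ) ≤ k then x else al n a * a i)
      = ((k:ℝ)+1) * x + al n a * (1 - T n a (k+1)) := by
  have h1 : ∑ i : Fin n, (if (i:ℕ) ≤ k then x else al n a * a i)
      = ∑ i ∈ Finset.range n, (if i ≤ k then x else al n a * ae n a i) := by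
    rw [← Fin.sum_univ_eq_sum_range (fun m => if m ≤ k then x else al n a * ae n a m)]
    exact Finset.sum_congr rfl fun i _ => by
      by_cases hik : (i:ℕ) ≤ k <;> simp [hik, ae_eq i.isLt]
  rw [h1, Finset.range_eq_Ico, ← Finset.sum_Ico_consecutive _ (by omega : 0 ≤ k+1) (by omega : k+1 ≤ n)]
  have h2 : ∑ i ∈ Finset.Ico 0 (k+1), (if i ≤ k then x else al n a * ae n a i)
      = ((k:ℝ)+1) * x := by
    rw [Finset.sum_congr rfl (fun i hi => if_pos (by simp at hi; omega))]
    rw [Finset.sum_const, Nat.card_Ico, nsmul_eq_mul]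
    push_cast; ring
  have h3 : ∑ i ∈ Finset.Ico (k+1) n, (if i ≤ k then x else al n a * ae n a i)
      = al n a * (1 - T n a (k+1)) := by
    rw [Finset.sum_congr rfl (fun i hi => if_neg (by simp at hi; omega))]
    rw [← Finset.mul_sum]
    congr 1
    have := Finset.sum_Ico_eq_sub (fun i => ae n a i) (by omega : k+1 ≤ n)
    rw [this]
    show T n a n - T n a (k+1) = 1 - T n a (k+1)
    rw [T_n hn ha]
  rw [h2, h3]

include hn ha in
lemma PP_sum {k : ℕ} (hk : k < n) {q : ℝ} (hq : q ∈ Set.Icc (tt n a k) (tt n a (k+1))) :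
    ∑ i, PP n a q i = q := by
  rw [Finset.sum_congr rfl (fun i _ => PP_phase hn ha hk hq i)]
  rw [sum_phase hn ha hk]
  unfold cc
  have : ((k:ℝ) + 1) ≠ 0 := by positivity
  field_simp
  ring

include hn ha in
lemma exists_phase {q : ℝ} (hq : q ∈ Set.Icc (tt n a 0) (tt n a n)) :
    ∃ k, k < n ∧ q ∈ Set.Icc (tt n a k) (tt n a (k+1)) := by
  have key : ∀ K, 1 ≤ K → K ≤ n → q ≤ tt n a K → ∃ k, k < K ∧ q ∈ Set.Icc (tt n a k) (tt n a (k+1)) := by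
    intro K hK1 hKn
    induction K, hK1 using Nat.le_induction with
    | base => intro hqK; exact ⟨0, by omega, hq.1, hqK⟩
    | succ K hK ih =>
      intro hqK
      rcases le_or_gt q (tt n a K) with h | h
      · obtain ⟨k, hk, hmem⟩ := ih (by omega) h
        exact ⟨k, by omega, hmem⟩
      · exact ⟨K, by omega, h.le, hqK⟩
  obtain ⟨k, hk, hmem⟩ := key n (by omega) le_rfl hq.2
  exact ⟨k, by omega, hmem⟩

include hn ha in
lemma q_pos {q : ℝ} (hq : tt n a 0 ≤ q) : 0 < q :=
  lt_of_lt_of_le (by rw [tt_zero hn]; exact al_pos hn ha) hq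

include hn ha in
lemma PP_nonneg (q : ℝ) (i : Fin n) : 0 ≤ PP n a q i :=
  le_trans (by have := al_pos hn ha; have := ha.1 i; positivity) (le_max_left _ _)

include hn ha in
lemma PP_monotone (q : ℝ) : Monotone (PP n a q) := by
  intro i j hij
  exact max_le_max (by
    have := al_pos hn ha
    have := ha.2.1.monotone hij
    nlinarith) le_rfl

variable (n a) in
/-- The affine model of `PP` on phase `k`. -/
def MD (k : ℕ) (x : ℝ) : Fin n → ℝ := fun i => if (i:ℕ) ≤ k then cc n a k x else al n a * a i

variable (n a) in
/-- slope vector on phase `k`. -/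
def wk (k : ℕ) : Fin n → ℝ := fun i => if (i:ℕ) ≤ k then 1/((k:ℝ)+1) else 0

lemma hasDerivAt_cc (k : ℕ) (x : ℝ) : HasDerivAt (cc n a k) (1/((k:ℝ)+1)) x := by
  unfold cc
  simpa using ((hasDerivAt_id x).sub_const (al n a * (1 - T n a (k+1)))).div_const ((k:ℝ)+1)

lemma hasDerivAt_MD (k : ℕ) (x : ℝ) : HasDerivAt (MD n a k) (wk n k) x := by
  rw [hasDerivAt_pi]
  intro i
  unfold MD wk
  by_cases h : (i:ℕ) ≤ k
  · simp only [if_pos h]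
    exact hasDerivAt_cc k x
  · simp only [if_neg h]
    exact hasDerivAt_const x _

include hn ha in
lemma PP_eqOn_MD {k : ℕ} (hk : k < n) :
    Set.EqOn (PP n a) (MD n a k) (Set.Icc (tt n a k) (tt n a (k+1))) := by
  intro x hx
  funext i
  exact PP_phase hn ha hk hx i

include hn ha in
lemma hasDerivAt_PP {k : ℕ} (hk : k < n) {q : ℝ}
    (hq : q ∈ Set.Ioo (tt n a k) (tt n a (k+1))) :
    HasDerivAt (PP n a) (wk n k) q := by
  apply (hasDerivAt_MD k q).congr_of_eventuallyEq
  apply Filter.eventuallyEq_of_mem (Ioo_mem_nhds hq.1 hq.2)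
  exact fun x hx => PP_eqOn_MD hn ha hk (Set.Ioo_subset_Icc_self hx)

include hn ha in
lemma hasDerivAt_PP_comp {k : ℕ} (hk : k < n) {q : ℝ}
    (hq : q ∈ Set.Ioo (tt n a k) (tt n a (k+1))) (i : Fin n) :
    HasDerivAt (fun x => PP n a x i) (wk n k i) q :=
  hasDerivAt_pi.1 (hasDerivAt_PP hn ha hk hq) i

include hn ha in
lemma derivWithin_Ici_PP {k : ℕ} (hk : k < n) (i : Fin n) :
    derivWithin (fun x => PP n a x i) (Set.Ici (tt n a k)) (tt n a k) = wk n k i := by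
  have hstep := tt_step hn ha hk
  have hmem : Set.Icc (tt n a k) (tt n a (k+1)) ∈ 𝓝[Set.Ici (tt n a k)] (tt n a k) := by
    apply Filter.mem_of_superset
      (Filter.inter_mem self_mem_nhdsWithin
        (mem_nhdsWithin_of_mem_nhds (Iio_mem_nhds hstep)))
    rintro x ⟨hx1, hx2⟩
    exact ⟨hx1, le_of_lt hx2⟩
  have hEv : (fun x => PP n a x i) =ᶠ[𝓝[Set.Ici (tt n a k)] (tt n a k)] (fun x => MD n a k x i) :=
    Filter.eventuallyEq_of_mem hmem (fun x hx => by rw [PP_eqOn_MD hn ha hk hx])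
  rw [hEv.derivWithin_eq (by
    rw [PP_eqOn_MD hn ha hk (Set.left_mem_Icc.2 hstep.le)])]
  exact ((hasDerivAt_pi.1 (hasDerivAt_MD k _) i).hasDerivWithinAt).derivWithin
    (uniqueDiffOn_Ici _ _ Set.self_mem_Ici)

include hn ha in
lemma derivWithin_Iic_PP {k : ℕ} (hk : k < n) (i : Fin n) :
    derivWithin (fun x => PP n a x i) (Set.Iic (tt n a (k+1))) (tt n a (k+1)) = wk n k i := by
  have hstep := tt_step hn ha hk
  have hmem : Set.Icc (tt n a k) (tt n a (k+1)) ∈ 𝓝[Set.Iic (tt n a (k+1))] (tt n a (k+1)) := by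
    apply Filter.mem_of_superset
      (Filter.inter_mem self_mem_nhdsWithin
        (mem_nhdsWithin_of_mem_nhds (Ioi_mem_nhds hstep)))
    rintro x ⟨hx1, hx2⟩
    exact ⟨le_of_lt hx2, hx1⟩
  have hEv : (fun x => PP n a x i) =ᶠ[𝓝[Set.Iic (tt n a (k+1))] (tt n a (k+1))] (fun x => MD n a k x i) :=
    Filter.eventuallyEq_of_mem hmem (fun x hx => by rw [PP_eqOn_MD hn ha hk hx])
  rw [hEv.derivWithin_eq (by
    rw [PP_eqOn_MD hn ha hk (Set.right_mem_Icc.2 hstep.le)])]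
  exact ((hasDerivAt_pi.1 (hasDerivAt_MD k _) i).hasDerivWithinAt).derivWithin
    (uniqueDiffOn_Iic _ _ Set.self_mem_Iic)

include hn ha in
lemma not_diff_break {m : ℕ} (hm1 : 1 ≤ m) (hm2 : m < n) :
    ¬ DifferentiableAt ℝ (PP n a) (tt n a m) := by
  intro hd
  set i0 : Fin n := ⟨0, by omega⟩
  have hdf : DifferentiableAt ℝ (fun x => PP n a x i0) (tt n a m) :=
    differentiableAt_pi.1 hd i0
  have hL : derivWithin (fun x => PP n a x i0) (Set.Iic (tt n a m)) (tt n a m)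
      = deriv (fun x => PP n a x i0) (tt n a m) :=
    (hdf.hasDerivAt.hasDerivWithinAt).derivWithin (uniqueDiffOn_Iic _ _ Set.self_mem_Iic)
  have hR : derivWithin (fun x => PP n a x i0) (Set.Ici (tt n a m)) (tt n a m)
      = deriv (fun x => PP n a x i0) (tt n a m) :=
    (hdf.hasDerivAt.hasDerivWithinAt).derivWithin (uniqueDiffOn_Ici _ _ Set.self_mem_Ici)
  have h1 : m - 1 + 1 = m := by omega
  have hL2 := derivWithin_Iic_PP hn ha (by omega : m - 1 < n) i0
  rw [h1] at hL2
  have hR2 := derivWithin_Ici_PP hn ha hm2 i0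
  have hwL : wk n (m-1) i0 = 1/(((m:ℝ)-1)+1) := by
    unfold wk
    rw [if_pos (by simp [i0])]
    rw [Nat.cast_sub (by omega)]
    push_cast; ring_nf
  have hwR : wk n m i0 = 1/((m:ℝ)+1) := by
    unfold wk
    rw [if_pos (by simp [i0])]
  rw [hL2, hwL] at hL
  rw [hR2, hwR] at hR
  have hm' : (1:ℝ) ≤ (m:ℝ) := by exact_mod_cast hm1
  have heq : 1/(((m:ℝ)-1)+1) = 1/((m:ℝ)+1) := by rw [hL, hR]
  rw [div_eq_div_iff (by linarith) (by linarith)] at heq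
  linarith

lemma finite_discrete (s : Finset ℝ) (q : ℝ) :
    ∃ ε > (0:ℝ), ∀ x ∈ s, x ∈ Set.Ioo (q-ε) (q+ε) → x = q := by
  classical
  induction s using Finset.induction with
  | empty => exact ⟨1, one_pos, by simp⟩
  | @insert x s hx ih =>
    obtain ⟨ε, hε, h⟩ := ih
    by_cases hxq : x = q
    · exact ⟨ε, hε, fun y hy hmem => by
        rcases Finset.mem_insert.1 hy with rfl | hy'
        · exact hxq
        · exact h y hy' hmem⟩
    · refine ⟨min ε (|x - q|), lt_min hε (abs_pos.2 (sub_ne_zero.2 hxq)), ?_⟩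
      intro y hy hmem
      rcases Finset.mem_insert.1 hy with rfl | hy'
      · exfalso
        have h1 : |y - q| < min ε (|y - q|) := by
          rw [abs_lt]
          constructor <;> [linarith [hmem.1]; linarith [hmem.2]]
        have := min_le_right ε (|y - q|)
        linarith
      · apply h y hy'
        have := min_le_left ε (|x - q|)
        exact ⟨by linarith [hmem.1], by linarith [hmem.2]⟩

include hn in
lemma continuous_hh : Continuous (hh n a) := by
  have h0 : 0 < n := by omega
  have hcc : ∀ b : ℕ, Continuous (cc n a b) := by
    intro b
    unfold cc
    continuity
  have key : ∀ (s : Finset ℕ) (hs : s.Nonempty),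
      Continuous (fun x => s.inf' hs (fun k => cc n a k x)) := by
    intro s hs
    induction hs using Finset.Nonempty.cons_induction with
    | singleton b =>
      have : ∀ x : ℝ, ({b} : Finset ℕ).inf' (Finset.singleton_nonempty b) (fun k => cc n a k x) = cc n a b x := by
        intro x; simp
      simp only [this]
      exact hcc b
    | cons b s hb hs ih =>
      simp only [Finset.inf'_cons hs]
      exact (hcc b).min ih
  have : hh n a = fun q => (Finset.range n).inf' (Finset.nonempty_range_iff.mpr h0.ne')
      (fun k => cc n a k q) := by
    funext q
    unfold hh
    rw [dif_pos h0]
  rw [this]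
  exact key _ _

include hn in
lemma continuous_PP : Continuous (PP n a) := by
  apply continuous_pi
  intro i
  exact continuous_const.max (continuous_hh hn)

include hn ha in
lemma cpl : ContPiecewiseLinearOn n (Set.Icc (tt n a 0) (tt n a n)) (PP n a) := by
  set I : Set ℝ := Set.Icc (tt n a 0) (tt n a n) with hI
  have h0n : tt n a 0 < tt n a n := by
    have := tt_le hn ha (by omega : 1 ≤ n)
    have := tt_step hn ha (by omega : 0 < n)
    linarith
  have hfr : frontier I = {tt n a 0, tt n a n} := frontier_Icc h0n.le
  -- non-differentiability points lie among breakpoints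
  have hsub : NonDiffSet n I (PP n a) ⊆ ↑((Finset.range (n+1)).image (tt n a)) := by
    intro q hq
    obtain ⟨hqI, hcase⟩ := hq
    simp only [Finset.coe_image, Finset.coe_range, Set.mem_image, Set.mem_Iio]
    rcases hcase with hfr' | hnd
    · rw [hfr] at hfr'
      rcases hfr' with h | h
      · exact ⟨0, by omega, h.symm⟩
      · exact ⟨n, by omega, (Set.mem_singleton_iff.1 h).symm⟩
    · obtain ⟨k, hk, hmem⟩ := exists_phase hn ha hqI
      by_cases h1 : q = tt n a k
      · exact ⟨k, by omega, h1.symm⟩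
      by_cases h2 : q = tt n a (k+1)
      · exact ⟨k+1, by omega, h2.symm⟩
      exfalso
      exact hnd (hasDerivAt_PP hn ha hk
        ⟨lt_of_le_of_ne hmem.1 (Ne.symm h1), lt_of_le_of_ne hmem.2 h2⟩).differentiableAt
  refine ⟨(continuous_PP hn).continuousOn, ⟨fun q hq => hq.1, ?_⟩, ?_⟩
  · intro q _
    obtain ⟨ε, hε, hd⟩ := finite_discrete ((Finset.range (n+1)).image (tt n a)) q
    refine ⟨ε, hε, ?_⟩
    rintro x ⟨hx1, hx2⟩
    exact hd x (by exact_mod_cast hsub hx1) hx2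
  · intro q hq
    have h1 : q ∉ frontier I ∧ DifferentiableAt ℝ (PP n a) q := by
      have := hq.2
      by_contra hcon
      apply this
      refine ⟨hq.1, ?_⟩
      rcases Classical.em (q ∈ frontier I) with h | h
      · exact Or.inl h
      · exact Or.inr (fun hd => hcon ⟨h, hd⟩)
    have hIoo : q ∈ Set.Ioo (tt n a 0) (tt n a n) := by
      rcases lt_or_eq_of_le hq.1.1 with h | h
      · rcases lt_or_eq_of_le hq.1.2 with h' | h'
        · exact ⟨h, h'⟩
        · exfalso; apply h1.1; rw [hfr]; right; exact h'.symm ▸ rfl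
      · exfalso; apply h1.1; rw [hfr]; left; exact h.symm ▸ rfl
    obtain ⟨k, hk, hmem⟩ := exists_phase hn ha hq.1
    have hqk : tt n a k < q := by
      rcases lt_or_eq_of_le hmem.1 with h | h
      · exact h
      · exfalso
        rcases Nat.eq_zero_or_pos k with rfl | hk1
        · exact hIoo.1.ne h
        · exact not_diff_break hn ha hk1 hk (h ▸ h1.2)
    have hqk1 : q < tt n a (k+1) := by
      rcases lt_or_eq_of_le hmem.2 with h | h
      · exact h
      · exfalso
        rcases Nat.lt_or_ge (k+1) n with hlt | hge
        · exact not_diff_break hn ha (by omega) hlt (h ▸ h1.2)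
        · have hkn : k + 1 = n := by omega
          exact hIoo.2.ne (hkn ▸ h)
    refine ⟨min (q - tt n a k) (tt n a (k+1) - q), by simp [hqk, hqk1], ?_⟩
    rintro x ⟨_, hx2⟩
    have hxIoo : x ∈ Set.Ioo (tt n a k) (tt n a (k+1)) := by
      obtain ⟨hl, hr⟩ := hx2
      have := min_le_left (q - tt n a k) (tt n a (k+1) - q)
      have := min_le_right (q - tt n a k) (tt n a (k+1) - q)
      constructor <;> linarith
    rw [(hasDerivAt_PP hn ha hk hxIoo).deriv, (hasDerivAt_PP hn ha hk ⟨hqk, hqk1⟩).deriv]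

include hn ha in
lemma g2 : ∀ x y : ℝ, x < y → Set.Ioo x y ⊆ Set.Icc (tt n a 0) (tt n a n) →
    (∀ q ∈ Set.Ioo x y, DifferentiableAt ℝ (PP n a) q) →
    ∃ rlo rhi : Fin n, rlo ≤ rhi ∧
      (∀ j : Fin n, rlo ≤ j → j ≤ rhi → ∀ q ∈ Set.Ioo x y,
        PP n a q j = PP n a q rlo ∧
        deriv (fun z => PP n a z j) q = 1 / (((rhi : ℕ) : ℝ) - ((rlo : ℕ) : ℝ) + 1)) ∧
      (∀ j : Fin n, j < rlo ∨ rhi < j →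
        ∀ p ∈ Set.Ioo x y, ∀ q ∈ Set.Ioo x y, PP n a p j = PP n a q j) := by
  classical
  intro x y hxy hsub hdiff
  have hxI : Set.Icc x y ⊆ Set.Icc (tt n a 0) (tt n a n) := by
    rw [← closure_Ioo hxy.ne]
    refine (closure_mono hsub).trans ?_
    rw [isClosed_Icc.closure_eq]
  have hx0 : tt n a 0 ≤ x := (hxI (Set.left_mem_Icc.2 hxy.le)).1
  have hyn : y ≤ tt n a n := (hxI (Set.right_mem_Icc.2 hxy.le)).2
  set k := Nat.findGreatest (fun m => tt n a m ≤ x) n with hkdef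
  have hk0 : tt n a k ≤ x := by
    rw [hkdef]
    exact Nat.findGreatest_spec (P := fun m => tt n a m ≤ x) (m := 0) (by omega) hx0
  have hkn : k ≤ n := by rw [hkdef]; exact Nat.findGreatest_le n
  have hklt : k < n := by
    rcases lt_or_eq_of_le hkn with h | h
    · exact h
    · exfalso
      rw [h] at hk0
      linarith
  have hstep : x < tt n a (k+1) := by
    by_contra h
    push_neg at h
    exact Nat.findGreatest_is_greatest (P := fun m => tt n a m ≤ x)
      (by rw [← hkdef]; omega) (by omega) h
  have hy : y ≤ tt n a (k+1) := by
    by_contra h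
    push_neg at h
    have hk1n : k + 1 < n := by
      rcases Nat.lt_or_ge (k+1) n with h' | h'
      · exact h'
      · exfalso
        have : k + 1 = n := by omega
        rw [this] at h
        linarith
    exact not_diff_break hn ha (by omega) hk1n (hdiff _ ⟨hstep, h⟩)
  refine ⟨⟨0, by omega⟩, ⟨k, hklt⟩, by simp [Fin.le_def], ?_, ?_⟩
  · intro j _ hjk q hq
    have hqIoo : q ∈ Set.Ioo (tt n a k) (tt n a (k+1)) :=
      ⟨hk0.trans_lt hq.1, hq.2.trans_le hy⟩
    have hjk' : (j:ℕ) ≤ k := hjk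
    constructor
    · rw [PP_phase hn ha hklt (Set.Ioo_subset_Icc_self hqIoo) j,
        PP_phase hn ha hklt (Set.Ioo_subset_Icc_self hqIoo) ⟨0, by omega⟩,
        if_pos hjk', if_pos (by simp)]
    · rw [(hasDerivAt_PP_comp hn ha hklt hqIoo j).deriv]
      unfold wk
      rw [if_pos hjk']
      norm_num
  · intro j hj p hp q hq
    rcases hj with hj | hj
    · exact absurd hj (by simp [Fin.lt_def])
    · have hjk : ¬ (j:ℕ) ≤ k := by
        have : (k:ℕ) < (j:ℕ) := hj
        omega
      have hpIoo : p ∈ Set.Icc (tt n a k) (tt n a (k+1)) :=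
        ⟨hk0.trans hp.1.le, hp.2.le.trans hy⟩
      have hqIoo : q ∈ Set.Icc (tt n a k) (tt n a (k+1)) :=
        ⟨hk0.trans hq.1.le, hq.2.le.trans hy⟩
      rw [PP_phase hn ha hklt hpIoo j, PP_phase hn ha hklt hqIoo j, if_neg hjk, if_neg hjk]

include hn ha in
lemma break_of_nondiff {q : ℝ} (hqint : q ∈ Set.Ioo (tt n a 0) (tt n a n))
    (hnd : ¬ DifferentiableAt ℝ (PP n a) q) :
    ∃ m, 1 ≤ m ∧ m < n ∧ q = tt n a m := by
  obtain ⟨k, hk, hmem⟩ := exists_phase hn ha (Set.Ioo_subset_Icc_self hqint)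
  rcases lt_or_eq_of_le hmem.1 with h1 | h1
  · rcases lt_or_eq_of_le hmem.2 with h2 | h2
    · exact absurd (hasDerivAt_PP hn ha hk ⟨h1, h2⟩).differentiableAt hnd
    · refine ⟨k+1, by omega, ?_, h2⟩
      rcases Nat.lt_or_ge (k+1) n with h' | h'
      · exact h'
      · exfalso
        have hn' : k + 1 = n := by omega
        rw [hn'] at h2
        rw [h2] at hqint
        exact lt_irrefl _ hqint.2
  · refine ⟨k, ?_, hk, h1.symm⟩
    rcases Nat.eq_zero_or_pos k with rfl | h
    · exfalso
      rw [← h1] at hqint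
      exact lt_irrefl _ hqint.1
    · exact h

include hn ha in
lemma g3 : ∀ q ∈ interior (Set.Icc (tt n a 0) (tt n a n)),
    ¬DifferentiableAt ℝ (PP n a) q →
    ∀ rlo rhi slo shi : Fin n, rlo ≤ rhi → slo ≤ shi →
      (∀ j : Fin n, rlo ≤ j → j ≤ rhi →
        derivWithin (fun z => PP n a z j) (Set.Iic q) q
          = 1 / (((rhi : ℕ) : ℝ) - ((rlo : ℕ) : ℝ) + 1)) →
      (∀ j : Fin n, slo ≤ j → j ≤ shi →
        derivWithin (fun z => PP n a z j) (Set.Ici q) q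
          = 1 / (((shi : ℕ) : ℝ) - ((slo : ℕ) : ℝ) + 1)) →
      rlo < shi →
      ∀ i : Fin n, rlo ≤ i → i ≤ shi → PP n a q i = PP n a q rlo := by
  intro q hqint hnd rlo rhi slo shi hr hs _ hsderiv _ i hi1 hi2
  rw [interior_Icc] at hqint
  obtain ⟨m, hm1, hm2, rfl⟩ := break_of_nondiff hn ha hqint hnd
  -- first: shi ≤ m
  have hshim : (shi:ℕ) ≤ m := by
    by_contra h
    push_neg at h
    have hd := hsderiv shi hs le_rfl
    rw [derivWithin_Ici_PP hn ha hm2 shi] at hd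
    unfold wk at hd
    rw [if_neg (by omega)] at hd
    have hslo : ((slo:ℕ):ℝ) ≤ ((shi:ℕ):ℝ) := by exact_mod_cast hs
    have : (0:ℝ) < 1 / (((shi : ℕ) : ℝ) - ((slo : ℕ) : ℝ) + 1) := by
      apply div_pos one_pos
      linarith
    rw [← hd] at this
    exact lt_irrefl _ this
  have hphase : tt n a m ∈ Set.Icc (tt n a m) (tt n a (m+1)) :=
    ⟨le_refl _, (tt_step hn ha hm2).le⟩
  rw [PP_phase hn ha hm2 hphase i, PP_phase hn ha hm2 hphase rlo,
    if_pos (by have : (i:ℕ) ≤ (shi:ℕ) := hi2; omega),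
    if_pos (by have h1 : (rlo:ℕ) ≤ (i:ℕ) := hi1; have h2 : (i:ℕ) ≤ (shi:ℕ) := hi2; omega)]

lemma affine_interp {A B s t c : ℝ} (hs : s ≤ c) (ht : c ≤ t)
    (h1 : 0 ≤ A + B*s) (h2 : 0 ≤ A + B*t) : 0 ≤ A + B*c := by
  rcases eq_or_lt_of_le (hs.trans ht) with h | h
  · have hcs : c = s := le_antisymm (by linarith) hs
    rw [hcs]; exact h1
  · nlinarith [mul_nonneg (sub_nonneg.2 hs) h2, mul_nonneg (sub_nonneg.2 ht) h1]

lemma scalarL1 {j K : ℕ} {u v w : ℝ} (h1 : (K:ℝ)*v ≤ (j:ℝ)*u) (h2 : u ≤ (K:ℝ)*w)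
    (h3 : u ≤ 1) (h4 : 0 ≤ v) (h5 : 0 ≤ w) (h6 : 0 ≤ u) (hK : 1 ≤ K) :
    v * ((K:ℝ)*w + 1 - u) ≤ (j:ℝ)*w := by
  have hKpos : (0:ℝ) < (K:ℝ) := by exact_mod_cast hK
  have hKw : (0:ℝ) ≤ (K:ℝ)*w := by positivity
  have hA : 0 ≤ ((j:ℝ)*u - (K:ℝ)*v) * ((K:ℝ)*w + 1 - u) :=
    mul_nonneg (by linarith) (by linarith)
  have hB : 0 ≤ (j:ℝ) * ((1 - u) * ((K:ℝ)*w - u)) :=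
    mul_nonneg (Nat.cast_nonneg j) (mul_nonneg (by linarith) (by linarith))
  have key : (K:ℝ) * ((j:ℝ)*w - v*((K:ℝ)*w + 1 - u))
      = ((j:ℝ)*u - (K:ℝ)*v) * ((K:ℝ)*w + 1 - u) + (j:ℝ)*((1 - u)*((K:ℝ)*w - u)) := by
    ring
  nlinarith [key]

variable (n a) in
def Sj (j : ℕ) (q : ℝ) : ℝ := ∑ i : Fin n, if (i:ℕ) < j then PP n a q i else 0

lemma psi_PP (j : ℕ) (q : ℝ) :
    psiSum n j (fun i => PP n a q i / q) = Sj n a j q / q := by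
  unfold psiSum Sj
  rw [Finset.sum_div]
  exact Finset.sum_congr rfl fun i _ => by split_ifs <;> simp

include hn ha in
lemma Sj_phase {k j : ℕ} (hk : k < n) {q : ℝ} (hq : q ∈ Set.Icc (tt n a k) (tt n a (k+1)))
    (hj : j ≤ n) :
    Sj n a j q = ((min j (k+1) : ℕ) : ℝ) * cc n a k q
      + al n a * (T n a j - T n a (min j (k+1))) := by
  set M := min j (k+1) with hM
  set c := cc n a k q with hc
  have h1 : Sj n a j q
      = ∑ i ∈ Finset.range n, (if i < j then (if i ≤ k then c else al n a * ae n a i) else 0) := by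
    unfold Sj
    rw [← Fin.sum_univ_eq_sum_range
      (fun m => if m < j then (if m ≤ k then c else al n a * ae n a m) else 0)]
    refine Finset.sum_congr rfl fun i _ => ?_
    by_cases hij : (i:ℕ) < j
    · rw [if_pos hij, if_pos hij, PP_phase hn ha hk hq i]
      by_cases hik : (i:ℕ) ≤ k
      · rw [if_pos hik, if_pos hik]
      · rw [if_neg hik, if_neg hik, ae_eq i.isLt]
    · rw [if_neg hij, if_neg hij]
  rw [h1, Finset.range_eq_Ico,
    ← Finset.sum_Ico_consecutive _ (Nat.zero_le j) hj]
  have h2 : ∑ i ∈ Finset.Ico j n, (if i < j then (if i ≤ k then c else al n a * ae n a i) else 0) = 0 := by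
    apply Finset.sum_eq_zero
    intro i hi
    rw [if_neg (by simp at hi; omega)]
  have h3 : ∑ i ∈ Finset.Ico 0 j, (if i < j then (if i ≤ k then c else al n a * ae n a i) else 0)
      = ∑ i ∈ Finset.Ico 0 j, (if i ≤ k then c else al n a * ae n a i) := by
    refine Finset.sum_congr rfl fun i hi => ?_
    rw [if_pos (by simp at hi; omega)]
  rw [h2, h3, add_zero, ← Finset.sum_Ico_consecutive _ (Nat.zero_le M) (min_le_left j (k+1))]
  have h4 : ∑ i ∈ Finset.Ico 0 M, (if i ≤ k then c else al n a * ae n a i) = (M:ℝ) * c := by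
    rw [Finset.sum_congr rfl (fun i hi => if_pos (by simp at hi; omega))]
    rw [Finset.sum_const, Nat.card_Ico, nsmul_eq_mul]
    norm_num
  have h5 : ∑ i ∈ Finset.Ico M j, (if i ≤ k then c else al n a * ae n a i)
      = al n a * (T n a j - T n a M) := by
    rw [Finset.sum_congr rfl (fun i hi => if_neg (by simp at hi; omega))]
    rw [← Finset.mul_sum]
    congr 1
    rw [Finset.sum_Ico_eq_sub _ (min_le_left j (k+1))]
    rfl
  rw [h4, h5]

include hn ha in
lemma q_eq_cc {k : ℕ} (q : ℝ) :
    q = ((k:ℝ)+1) * cc n a k q + al n a * (1 - T n a (k+1)) := by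
  unfold cc
  have : ((k:ℝ)+1) ≠ 0 := by positivity
  field_simp
  ring

set_option maxHeartbeats 2000000 in
include hn ha in
lemma Sj_bounds {j : ℕ} (hj1 : 1 ≤ j) (hj2 : j ≤ n - 1) {q : ℝ}
    (hq : q ∈ Set.Icc (tt n a 0) (tt n a n)) :
    T n a j * q ≤ Sj n a j q ∧ (n:ℝ) * Sj n a j q ≤ (j:ℝ) * q := by
  obtain ⟨k, hk, hmem⟩ := exists_phase hn ha hq
  have hqc := q_eq_cc hn ha (k := k) (q := q)
  set c := cc n a k q with hc
  set u := T n a (k+1) with hu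
  set v := T n a j with hv
  have hal := al_pos hn ha
  have hc1 : al n a * ae n a k ≤ c := by
    rw [hc, ← cc_tt_self hk]
    exact cc_mono_q hmem.1
  have hval : 0 ≤ v := T_nonneg hn ha j
  have hv1 : v ≤ 1 := T_le_one hn ha (by omega)
  have hu0 : 0 ≤ u := T_nonneg hn ha (k+1)
  have hu1 : u ≤ 1 := T_le_one hn ha (by omega)
  have hcp : 0 ≤ c := le_trans (mul_nonneg hal.le (ae_pos hn ha k).le) hc1
  have hKc : (0:ℝ) < (k:ℝ)+1 := by positivity
  rcases Nat.lt_or_ge (k+1) n with hk1 | hk1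
  · -- k+1 < n
    have hc2 : c ≤ al n a * ae n a (k+1) := by
      rw [hc, ← cc_tt_succ hk1]
      exact cc_mono_q hmem.2
    rcases le_or_gt j (k+1) with hjk | hjk
    · -- j ≤ k+1 : Sj = j * c
      have hSj : Sj n a j q = (j:ℝ) * c := by
        rw [Sj_phase hn ha hk hmem (by omega), min_eq_left hjk]
        simp [hc]
      constructor
      · -- lower bound by interpolation in c
        rw [hSj, hqc]
        have hscal : ∀ m : ℕ, k ≤ m → m ≤ k + 1 →
            0 ≤ (- v * (al n a * (1 - u))) + ((j:ℝ) - v * ((k:ℝ)+1)) * (al n a * ae n a m) := by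
          intro m hm1 hm2
          have hw := ae_pos hn ha m
          have hL1 := scalarL1 (j := j) (K := k+1) (u := u) (v := v) (w := ae n a m)
            (by push_cast; exact_mod_cast T_avg hn ha hjk)
            (by push_cast; exact_mod_cast T_le_mul hn ha (by omega : k + 1 ≤ m + 1))
            hu1 hval hw.le hu0 (by omega)
          push_cast at hL1 ⊢
          nlinarith [hL1]
        have hint := affine_interp (A := - v * (al n a * (1 - u)))
          (B := (j:ℝ) - v * ((k:ℝ)+1)) hc1 hc2
          (by have := hscal k (le_refl k) (by omega); push_cast at this ⊢; linarith)
          (by have := hscal (k+1) (by omega) (le_refl _); push_cast at this ⊢; linarith)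
        nlinarith [hint]
      · -- upper bound
        rw [hSj, hqc]
        have htail := T_tail hn ha (le_refl (k+1)) (by omega : k+1 ≤ n)
        rw [← hu] at htail
        have hjpos : (0:ℝ) ≤ (j:ℝ) := Nat.cast_nonneg j
        have hnK : (0:ℝ) ≤ (n:ℝ) - ((k:ℝ)+1) := by
          have : ((k:ℝ)+1) ≤ (n:ℝ) := by exact_mod_cast hk1.le
          linarith
        have hae := ae_pos hn ha (k+1)
        have hkey : (n:ℝ) * c ≤ ((k:ℝ)+1) * c + al n a * (1 - u) := by
          have h1 : ((n:ℝ) - ((k:ℝ)+1)) * c ≤ ((n:ℝ) - ((k:ℝ)+1)) * (al n a * ae n a (k+1)) :=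
            mul_le_mul_of_nonneg_left hc2 hnK
          have h2 : ((n:ℝ) - ((k:ℝ)+1)) * (al n a * ae n a (k+1)) ≤ al n a * (1 - u) := by
            have h3 : ((n:ℝ) - ((k:ℝ)+1)) * ae n a (k+1) ≤ 1 - u := by
              have := htail
              push_cast at this ⊢
              linarith [this]
            nlinarith [hal]
          linarith
        nlinarith [hkey, hjpos]
    · -- j > k+1 : Sj = (k+1) * c + al * (v - u)
      have hSj : Sj n a j q = ((k:ℝ)+1) * c + al n a * (v - u) := by
        rw [Sj_phase hn ha hk hmem (by omega), min_eq_right hjk.le]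
        push_cast
        ring
      have huv : u ≤ v := T_mono hn ha (by omega)
      have huc : al n a * u ≤ ((k:ℝ)+1) * c := by
        have h1 : u ≤ ((k:ℝ)+1) * ae n a k := by
          have := T_le_mul hn ha (le_refl (k+1))
          push_cast at this ⊢
          exact_mod_cast this
        calc al n a * u ≤ al n a * (((k:ℝ)+1) * ae n a k) := by nlinarith [hal]
          _ = ((k:ℝ)+1) * (al n a * ae n a k) := by ring
          _ ≤ ((k:ℝ)+1) * c := by nlinarith [hKc]
      constructor
      · rw [hSj, hqc]
        have key : 0 ≤ (1 - v) * ((((k:ℝ)+1))*c - al n a * u) :=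
          mul_nonneg (by linarith) (by linarith [huc])
        nlinarith [key]
      · rw [hSj, hqc]
        have h1 : ((n:ℝ) - j) * ae n a j ≤ 1 - v := by
          have := T_tail hn ha (le_refl j) (by omega : j ≤ n)
          exact this
        have h2 : v - u ≤ ((j:ℝ) - ((k:ℝ)+1)) * ae n a j := by
          have := T_gap hn ha (by omega : k + 1 ≤ j) (by omega : j ≤ j + 1)
          push_cast at this ⊢
          linarith
        have h3 : ae n a (k+1) ≤ ae n a j := ae_mono hn ha (by omega)
        have h4 : c ≤ al n a * ae n a j := hc2.trans (by nlinarith [hal])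
        have hnj : (0:ℝ) ≤ (n:ℝ) - j := by
          have : (j:ℝ) ≤ (n:ℝ) := by exact_mod_cast (by omega : j ≤ n)
          linarith
        have hjpos : (1:ℝ) ≤ (j:ℝ) := by exact_mod_cast hj1
        have haej := ae_pos hn ha j
        nlinarith [mul_le_mul_of_nonneg_left h4 hnj, mul_le_mul_of_nonneg_left h2 hnj,
          mul_le_mul_of_nonneg_left h1 (by linarith : (0:ℝ) ≤ (j:ℝ))]
  · -- k+1 = n (equivalently k = n-1): u = 1, q = n * c
    have hkn : k + 1 = n := by omega
    have hu1' : u = 1 := by rw [hu, hkn, T_n hn ha]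
    have hkr : ((k:ℝ)+1) = (n:ℝ) := by exact_mod_cast hkn
    have hqn : q = (n:ℝ) * c := by
      rw [hqc, hu1', hkr]
      ring
    have hjk : j ≤ k + 1 := by omega
    have hSj : Sj n a j q = (j:ℝ) * c := by
      rw [Sj_phase hn ha hk hmem (by omega), min_eq_left hjk]
      simp [hc]
    have havg : (n:ℝ) * v ≤ (j:ℝ) * 1 := by
      have := T_avg hn ha (by omega : j ≤ n)
      rw [T_n hn ha] at this
      exact_mod_cast this
    constructor
    · rw [hSj, hqn]
      nlinarith [havg, hcp]
    · rw [hSj, hqn]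
      ring_nf
      nlinarith [hcp]

include hn ha in
lemma Sj_left {j : ℕ} (hj1 : 1 ≤ j) (hj : j ≤ n) :
    Sj n a j (tt n a 0) = T n a j * tt n a 0 := by
  have h0 : (0:ℕ) < n := by omega
  have hmem : tt n a 0 ∈ Set.Icc (tt n a 0) (tt n a (0+1)) :=
    ⟨le_rfl, (tt_step hn ha h0).le⟩
  rw [Sj_phase hn ha h0 hmem hj]
  have hmin : min j (0+1) = 1 := by omega
  rw [hmin, cc_tt_self h0, tt_zero hn]
  have hT1 : T n a 1 = ae n a 0 := by unfold T; rw [Finset.sum_range_one]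
  rw [hT1]
  push_cast
  ring

include hn ha in
lemma Sj_right {j : ℕ} (hj : j ≤ n) :
    (n:ℝ) * Sj n a j (tt n a n) = (j:ℝ) * tt n a n := by
  have h1 : n - 1 + 1 = n := by omega
  have hk : n - 1 < n := by omega
  have hq : tt n a n ∈ Set.Icc (tt n a (n-1)) (tt n a (n-1+1)) := by
    rw [h1]
    exact ⟨tt_le hn ha (by omega), le_rfl⟩
  rw [Sj_phase hn ha hk hq (by omega), cc_last hn ha]
  have h2 : min j (n-1+1) = j := by omega
  rw [h2]
  have hn0 : (n:ℝ) ≠ 0 := by positivity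
  field_simp
  ring

include hn ha in
lemma infsup {j : ℕ} (hj1 : 1 ≤ j) (hj2 : j ≤ n - 1) :
    sInf ((fun q : ℝ => psiSum n j (fun i => PP n a q i / q)) ''
        Set.Icc (tt n a 0) (tt n a n)) = psiSum n j a ∧
    sSup ((fun q : ℝ => psiSum n j (fun i => PP n a q i / q)) ''
        Set.Icc (tt n a 0) (tt n a n)) = (j : ℝ) / n := by
  have h0n : tt n a 0 < tt n a n :=
    lt_of_lt_of_le (tt_step hn ha (by omega)) (tt_le hn ha (by omega))
  have hmemL : tt n a 0 ∈ Set.Icc (tt n a 0) (tt n a n) := Set.left_mem_Icc.2 h0n.le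
  have hmemR : tt n a n ∈ Set.Icc (tt n a 0) (tt n a n) := Set.right_mem_Icc.2 h0n.le
  have hq0 : ∀ q ∈ Set.Icc (tt n a 0) (tt n a n), (0:ℝ) < q := fun q hq => q_pos hn ha hq.1
  have hnpos : (0:ℝ) < (n:ℝ) := by positivity
  set F := fun q : ℝ => psiSum n j (fun i => PP n a q i / q) with hF
  have hFval : ∀ q : ℝ, F q = Sj n a j q / q := fun q => psi_PP j q
  have hFL : F (tt n a 0) = T n a j := by
    rw [hFval, Sj_left hn ha hj1 (by omega),
      mul_div_assoc, div_self (hq0 _ hmemL).ne', mul_one]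
  have hFR : F (tt n a n) = (j:ℝ) / n := by
    rw [hFval]
    rw [div_eq_div_iff (hq0 _ hmemR).ne' hnpos.ne']
    have := Sj_right hn ha (j := j) (by omega)
    linarith
  constructor
  · rw [psiSum_eq_T hn ha (by omega : j ≤ n)]
    apply IsLeast.csInf_eq
    constructor
    · exact ⟨tt n a 0, hmemL, hFL⟩
    · rintro y ⟨q, hq, rfl⟩
      rw [hFval, le_div_iff₀ (hq0 q hq)]
      exact (Sj_bounds hn ha hj1 hj2 hq).1
  · apply IsGreatest.csSup_eq
    constructor
    · exact ⟨tt n a n, hmemR, hFR⟩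
    · rintro y ⟨q, hq, rfl⟩
      rw [hFval, div_le_div_iff₀ (hq0 q hq) hnpos]
      have := (Sj_bounds hn ha hj1 hj2 hq).2
      linarith

end GenNSys

open GenNSys

/-- Proposition 5.1: for `a ∈ Δ⁽ⁿ⁾` there is a generalized `n`-system `P` on
`[na₁, na_n]` with `inf_q ψ_j(q⁻¹P(q)) = ψ_j(a)` and `sup_q ψ_j(q⁻¹P(q)) = j/n`
for `j = 1,…,n-1`. -/
theorem exists_gen_nsystem_basic (n : ℕ) (hn : 2 ≤ n)
    (a : Fin n → ℝ) (ha : a ∈ DeltaStrict n) :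
    ∃ P : ℝ → Fin n → ℝ,
      IsGenNSystem n (Set.Icc (n * a ⟨0, by omega⟩) (n * a ⟨n - 1, by omega⟩)) P ∧
      ∀ j : ℕ, 1 ≤ j → j ≤ n - 1 →
        sInf ((fun q : ℝ => psiSum n j (fun i => P q i / q)) ''
            Set.Icc (n * a ⟨0, by omega⟩) (n * a ⟨n - 1, by omega⟩))
          = psiSum n j a ∧
        sSup ((fun q : ℝ => psiSum n j (fun i => P q i / q)) ''
            Set.Icc (n * a ⟨0, by omega⟩) (n * a ⟨n - 1, by omega⟩))
          = (j : ℝ) / n := by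
  have e0 : tt n a 0 = (n:ℝ) * a ⟨0, by omega⟩ := by
    rw [tt_zero hn]
    unfold al
    rw [ae_eq (by omega : 0 < n)]
  have en : tt n a n = (n:ℝ) * a ⟨n-1, by omega⟩ := by
    rw [tt_top, ae_eq (by omega : n - 1 < n)]
  have hIcc : Set.Icc ((n:ℝ) * a ⟨0, by omega⟩) ((n:ℝ) * a ⟨n - 1, by omega⟩)
      = Set.Icc (tt n a 0) (tt n a n) := by rw [e0, en]
  refine ⟨PP n a, ?_, ?_⟩
  · rw [hIcc]
    refine ⟨cpl hn ha, ?_, g2 hn ha, g3 hn ha⟩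
    intro q hq
    refine ⟨⟨PP_nonneg hn ha q, PP_monotone hn ha q⟩, ?_⟩
    obtain ⟨k, hk, hmem⟩ := exists_phase hn ha hq
    exact PP_sum hn ha hk hmem
  · intro j hj1 hj2
    rw [hIcc]
    exact infsup hn ha hj1 hj2

end
end

section
/- Let 0 < a < b, let t ≥ 2 be an integer, let q₁ = a < q₂ < ⋯ < q_t = b be real numbers, and let M: [a, b] → ℝ be a continuous function which is affine with slope ρ_i on each interval [q_i, q_{i+1}] for i = 1, …, t−1. If ρ₁ > ρ₂ > ⋯ > ρ_{t−1} > M(b)/b, then the function q ↦ M(q)/q is strictly increasing on [a, b] and is bounded above by ρ₁ on [a, b]. -/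
/-- Lemma 5.2(2): if `M : [a,b] → ℝ` is continuous and affine with slope `ρᵢ` on
each `[qᵢ, qᵢ₊₁]` (where `q₁ = a < q₂ < ⋯ < q_t = b`), and
`ρ₁ > ⋯ > ρ_{t-1} > M(b)/b`, then `q ↦ M(q)/q` is strictly increasing on `[a,b]`
and bounded above there by `ρ₁`. -/
theorem ratio_strictMonoOn_of_decreasing_slopes
    (a b : ℝ) (ha : 0 < a) (hab : a < b)
    (t : ℕ) (ht : 2 ≤ t) (q : ℕ → ℝ) (ρ : ℕ → ℝ)
    (hqa : q 1 = a) (hqb : q t = b)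
    (hqmono : ∀ i : ℕ, 1 ≤ i → i ≤ t - 1 → q i < q (i + 1))
    (M : ℝ → ℝ) (hcont : ContinuousOn M (Set.Icc a b))
    (haff : ∀ i : ℕ, 1 ≤ i → i ≤ t - 1 →
      ∀ x ∈ Set.Icc (q i) (q (i + 1)), M x = M (q i) + ρ i * (x - q i))
    (hslopes : ∀ i : ℕ, 1 ≤ i → i ≤ t - 2 → ρ (i + 1) < ρ i)
    (hlast : M b / b < ρ (t - 1)) :
    StrictMonoOn (fun x : ℝ => M x / x) (Set.Icc a b) ∧
      ∀ x ∈ Set.Icc a b, M x / x ≤ ρ 1 := by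
  obtain ⟨n, rfl⟩ : ∃ n, t = n + 2 := ⟨t - 2, by omega⟩
  -- monotonicity of q on the index range
  have qmono : ∀ i j, 1 ≤ i → i ≤ j → j ≤ n + 2 → q i ≤ q j := by
    intro i j hi hij hj
    induction j with
    | zero => omega
    | succ m ih =>
      rcases Nat.lt_or_ge i (m + 1) with h | h
      · have h1 : q i ≤ q m := ih (by omega) (by omega)
        have h2 : q m < q (m + 1) := hqmono m (by omega) (by omega)
        linarith
      · have : i = m + 1 := by omega
        subst this; exact le_rfl
  have qpos : ∀ i, 1 ≤ i → i ≤ n + 2 → 0 < q i := by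
    intro i h1 h2
    have := qmono 1 i le_rfl h1 h2
    rw [hqa] at this
    linarith
  -- key downward induction: M (q (i+1)) < ρ i * q (i+1)
  have key : ∀ k i, i + k = n + 1 → 1 ≤ i → M (q (i + 1)) < ρ i * q (i + 1) := by
    intro k
    induction k with
    | zero =>
      intro i hik _
      have hi : i = n + 1 := by omega
      subst hi
      have hb : q (n + 1 + 1) = b := hqb
      rw [hb]
      have hb0 : (0 : ℝ) < b := ha.trans hab
      exact (div_lt_iff₀ hb0).mp hlast
    | succ k ih =>
      intro i hik hi
      have h2 := ih (i + 1) (by omega) (by omega)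
      have haffeq := haff (i + 1) (by omega) (by omega) (q (i + 1 + 1))
        ⟨(hqmono (i + 1) (by omega) (by omega)).le, le_rfl⟩
      have hsl := hslopes i hi (by omega)
      have hq1 : 0 < q (i + 1) := qpos (i + 1) (by omega) (by omega)
      nlinarith [mul_pos hq1 (sub_pos.mpr hsl)]
  -- representation on each piece
  have hrep : ∀ i, 1 ≤ i → i ≤ n + 1 → ∀ x ∈ Set.Icc (q i) (q (i + 1)),
      M x = ρ i * x + (M (q (i + 1)) - ρ i * q (i + 1)) := by
    intro i h1 h2 x hx
    have h := haff i h1 h2 x hx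
    have h' := haff i h1 h2 (q (i + 1)) ⟨(hqmono i h1 h2).le, le_rfl⟩
    linear_combination h - h'
  have hc : ∀ i, 1 ≤ i → i ≤ n + 1 → M (q (i + 1)) - ρ i * q (i + 1) < 0 := by
    intro i h1 h2
    have := key (n + 1 - i) i (by omega) h1
    linarith
  -- strict monotonicity on each piece
  have hmonoI : ∀ i, 1 ≤ i → i ≤ n + 1 →
      StrictMonoOn (fun x : ℝ => M x / x) (Set.Icc (q i) (q (i + 1))) := by
    intro i h1 h2 x hx y hy hxy
    have hx0 : 0 < x := lt_of_lt_of_le (qpos i h1 (by omega)) hx.1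
    have hy0 : 0 < y := lt_of_lt_of_le (qpos i h1 (by omega)) hy.1
    have hci := hc i h1 h2
    simp only [hrep i h1 h2 x hx, hrep i h1 h2 y hy]
    rw [div_lt_div_iff₀ hx0 hy0]
    nlinarith [mul_neg_of_neg_of_pos hci (sub_pos.mpr hxy)]
  -- bound on each piece
  have hboundI : ∀ i, 1 ≤ i → i ≤ n + 1 → ∀ x ∈ Set.Icc (q i) (q (i + 1)),
      M x / x < ρ i := by
    intro i h1 h2 x hx
    have hx0 : 0 < x := lt_of_lt_of_le (qpos i h1 (by omega)) hx.1
    rw [hrep i h1 h2 x hx, div_lt_iff₀ hx0]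
    have := hc i h1 h2
    linarith
  -- slopes below ρ 1
  have hρ1 : ∀ i, 1 ≤ i → i ≤ n + 1 → ρ i ≤ ρ 1 := by
    intro i h1 h2
    induction i with
    | zero => omega
    | succ m ih =>
      by_cases hm : m = 0
      · subst hm; exact le_rfl
      · exact le_of_lt (lt_of_lt_of_le (hslopes m (by omega) (by omega))
          (ih (by omega) (by omega)))
  -- covering
  have hcover : ∀ m, m ≤ n → ∀ x ∈ Set.Icc (q 1) (q (m + 2)),
      ∃ i, 1 ≤ i ∧ i ≤ m + 1 ∧ x ∈ Set.Icc (q i) (q (i + 1)) := by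
    intro m
    induction m with
    | zero => intro _ x hx; exact ⟨1, le_rfl, le_rfl, hx⟩
    | succ m ih =>
      intro hm x hx
      by_cases h : x ≤ q (m + 2)
      · obtain ⟨i, h1, h2, h3⟩ := ih (by omega) x ⟨hx.1, h⟩
        exact ⟨i, h1, by omega, h3⟩
      · exact ⟨m + 2, by omega, by omega, ⟨le_of_not_ge h, hx.2⟩⟩
  -- gluing
  have glue : ∀ m, m ≤ n → StrictMonoOn (fun x : ℝ => M x / x) (Set.Icc (q 1) (q (m + 2))) := by
    intro m
    induction m with
    | zero => intro _; exact hmonoI 1 le_rfl (by omega)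
    | succ m ih =>
      intro hm
      have h1 := ih (by omega)
      have h2 := hmonoI (m + 2) (by omega) (by omega)
      have hle1 : q 1 ≤ q (m + 2) := qmono 1 (m + 2) le_rfl (by omega) (by omega)
      have hle2 : q (m + 2) ≤ q (m + 2 + 1) := (hqmono (m + 2) (by omega) (by omega)).le
      have hu : Set.Icc (q 1) (q (m + 2)) ∪ Set.Icc (q (m + 2)) (q (m + 2 + 1))
          = Set.Icc (q 1) (q (m + 2 + 1)) := Set.Icc_union_Icc_eq_Icc hle1 hle2
      have := StrictMonoOn.union h1 h2 (isGreatest_Icc hle1) (isLeast_Icc hle2)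
      rw [hu] at this
      exact this
  constructor
  · have := glue n le_rfl
    rwa [hqa, hqb] at this
  · intro x hx
    rw [← hqa, ← hqb] at hx
    obtain ⟨i, h1, h2, h3⟩ := hcover n le_rfl x hx
    exact le_trans (hboundI i h1 h2 x h3).le (hρ1 i h1 h2)
end
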